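/- arXiv:1103.6101 — 5 statements merged into one kernel-verified Lean document; each statement's English description precedes it below -/
import Mathlib

section
/- Let 0 < a ≤ b and let E := {ξ ∈ ℝ^{2×2} : λ₁(ξ) = a, λ₂(ξ) = b}. Then E^{pc} = E^{rc} = { ξ ∈ ℝ^{2×2} : λ₁(ξ)·λ₂(ξ) ≤ ab and λ₂(ξ) ≤ b }. -/
open scoped BigOperators

/-- Square of the Frobenius norm of a 2×2 real matrix. -/
noncomputable def frobSq (ξ : Matrix (Fin 2) (Fin 2) ℝ) : ℝ := ∑ i, ∑ j, (ξ i j) ^ 2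

/-- The Frobenius norm of a 2×2 real matrix. -/
noncomputable def frobNorm (ξ : Matrix (Fin 2) (Fin 2) ℝ) : ℝ := Real.sqrt (frobSq ξ)

/-- The smallest singular value of a 2×2 real matrix. -/
noncomputable def lam1 (ξ : Matrix (Fin 2) (Fin 2) ℝ) : ℝ :=
  (Real.sqrt (frobSq ξ + 2 * |ξ.det|) - Real.sqrt (frobSq ξ - 2 * |ξ.det|)) / 2

/-- The largest singular value of a 2×2 real matrix. -/
noncomputable def lam2 (ξ : Matrix (Fin 2) (Fin 2) ℝ) : ℝ :=
  (Real.sqrt (frobSq ξ + 2 * |ξ.det|) + Real.sqrt (frobSq ξ - 2 * |ξ.det|)) / 2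

/-- A function on 2×2 matrices is rank one convex if it is convex along rank one segments. -/
def RankOneConvex (f : Matrix (Fin 2) (Fin 2) ℝ → ℝ) : Prop :=
  ∀ (ξ η : Matrix (Fin 2) (Fin 2) ℝ) (t : ℝ), t ∈ Set.Icc (0 : ℝ) 1 →
    (ξ - η).rank = 1 → f (t • ξ + (1 - t) • η) ≤ t * f ξ + (1 - t) * f η

/-- The rank one convex hull `E^{rc}` of a set of 2×2 matrices. -/
def rcHull (E : Set (Matrix (Fin 2) (Fin 2) ℝ)) : Set (Matrix (Fin 2) (Fin 2) ℝ) :=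
  {ξ | ∀ f : Matrix (Fin 2) (Fin 2) ℝ → ℝ,
    RankOneConvex f → (∀ η ∈ E, f η ≤ 0) → f ξ ≤ 0}

/-- The rank one convex hull `U^{rc}` of an open set of 2×2 matrices. -/
def rcHullOpen (U : Set (Matrix (Fin 2) (Fin 2) ℝ)) : Set (Matrix (Fin 2) (Fin 2) ℝ) :=
  {ξ | ∃ E : Set (Matrix (Fin 2) (Fin 2) ℝ), E ⊆ U ∧ IsCompact E ∧ ξ ∈ rcHull E}

/-- A function on 2×2 matrices is polyconvex if it is a convex function of (ξ, det ξ). -/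
def PolyconvexFun (f : Matrix (Fin 2) (Fin 2) ℝ → ℝ) : Prop :=
  ∃ g : Matrix (Fin 2) (Fin 2) ℝ × ℝ → ℝ,
    ConvexOn ℝ Set.univ g ∧ ∀ ξ, f ξ = g (ξ, ξ.det)

/-- The polyconvex hull `E^{pc}` of a set of 2×2 matrices. -/
def pcHull (E : Set (Matrix (Fin 2) (Fin 2) ℝ)) : Set (Matrix (Fin 2) (Fin 2) ℝ) :=
  {ξ | ∀ f : Matrix (Fin 2) (Fin 2) ℝ → ℝ,
    PolyconvexFun f → (∀ η ∈ E, f η ≤ 0) → f ξ ≤ 0}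

/-- The polyconvex hull `U^{pc}` of an open set of 2×2 matrices. -/
def pcHullOpen (U : Set (Matrix (Fin 2) (Fin 2) ℝ)) : Set (Matrix (Fin 2) (Fin 2) ℝ) :=
  {ξ | ∃ E : Set (Matrix (Fin 2) (Fin 2) ℝ), E ⊆ U ∧ IsCompact E ∧ ξ ∈ pcHull E}

/-- A set of 2×2 matrices is polyconvex. -/
def PolyconvexSet (A : Set (Matrix (Fin 2) (Fin 2) ℝ)) : Prop :=
  ∀ (ξ : Fin 5 → Matrix (Fin 2) (Fin 2) ℝ) (t : Fin 5 → ℝ),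
    (∀ i, ξ i ∈ A) → (∀ i, 0 ≤ t i) → (∑ i, t i) = 1 →
    (∑ i, t i * (ξ i).det) = (∑ i, t i • ξ i).det →
    (∑ i, t i • ξ i) ∈ A

/-- The polyconvex hull `Pco E`: the smallest polyconvex set containing `E`. -/
def Pco (E : Set (Matrix (Fin 2) (Fin 2) ℝ)) : Set (Matrix (Fin 2) (Fin 2) ℝ) :=
  ⋂₀ {A | PolyconvexSet A ∧ E ⊆ A}

/-- A set of 2×2 matrices is isotropic if it is invariant under orthogonal transformations. -/
def Isotropic (E : Set (Matrix (Fin 2) (Fin 2) ℝ)) : Prop :=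
  ∀ R S : Matrix (Fin 2) (Fin 2) ℝ, R * R.transpose = 1 → S * S.transpose = 1 → ∀ ξ ∈ E, R * ξ * S ∈ E

/-- The distance (w.r.t. the Frobenius norm) from a matrix to a set of matrices. -/
noncomputable def distE (ξ : Matrix (Fin 2) (Fin 2) ℝ) (E : Set (Matrix (Fin 2) (Fin 2) ℝ)) : ℝ :=
  sInf ((fun η => frobNorm (ξ - η)) '' E)

/-- The function `f_θ(x,y) = xy + θ(y-x)`. -/
def ftheta (θ : ℝ) (p : ℝ × ℝ) : ℝ := p.1 * p.2 + θ * (p.2 - p.1)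

/-- The gradient of a map `u : ℝ² → ℝ²` at `x`, as a 2×2 matrix. -/
noncomputable def gradMatrix (u : (Fin 2 → ℝ) → (Fin 2 → ℝ)) (x : Fin 2 → ℝ) :
    Matrix (Fin 2) (Fin 2) ℝ :=
  LinearMap.toMatrix' (fderiv ℝ u x).toLinearMap

namespace SVhull

abbrev Mat := Matrix (Fin 2) (Fin 2) ℝ

noncomputable def Mk (z w : ℂ) : Mat :=
  !![z.re + w.re, -z.im + w.im; z.im + w.im, z.re - w.re]

theorem Mk_surj (ξ : Mat) : ∃ z w, ξ = Mk z w := by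
  refine ⟨⟨(ξ 0 0 + ξ 1 1)/2, (ξ 1 0 - ξ 0 1)/2⟩, ⟨(ξ 0 0 - ξ 1 1)/2, (ξ 1 0 + ξ 0 1)/2⟩, ?_⟩
  ext i j
  fin_cases i <;> fin_cases j <;> simp [Mk] <;> ring

theorem Mk_mul (z w z' w' : ℂ) :
    Mk z w * Mk z' w' = Mk (z*z' + w * (starRingEnd ℂ) w') (z*w' + w * (starRingEnd ℂ) z') := by
  ext i j
  fin_cases i <;> fin_cases j <;>
    simp [Mk, Matrix.mul_apply, Fin.sum_univ_two, Complex.mul_re, Complex.mul_im] <;> ring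

theorem Mk_add (z w z' w' : ℂ) : Mk z w + Mk z' w' = Mk (z+z') (w+w') := by
  ext i j
  fin_cases i <;> fin_cases j <;> simp [Mk] <;> ring

theorem Mk_smul (t : ℝ) (z w : ℂ) : t • Mk z w = Mk (t*z) (t*w) := by
  ext i j
  fin_cases i <;> fin_cases j <;>
    simp [Mk, Complex.mul_re, Complex.mul_im] <;> ring

theorem det_Mk (z w : ℂ) : (Mk z w).det = Complex.normSq z - Complex.normSq w := by
  simp [Mk, Matrix.det_fin_two, Complex.normSq_apply]; ring

theorem frobSq_Mk (z w : ℂ) : frobSq (Mk z w) = 2*(Complex.normSq z + Complex.normSq w) := by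
  simp [Mk, frobSq, Fin.sum_univ_two, Complex.normSq_apply]; ring

theorem Mk_diag (r s : ℝ) : Mk (r : ℂ) (s : ℂ) = !![r + s, 0; 0, r - s] := by
  ext i j
  fin_cases i <;> fin_cases j <;> simp [Mk]

theorem lam_Mk (z w : ℂ) :
    lam1 (Mk z w) = |‖z‖ - ‖w‖| ∧
    lam2 (Mk z w) = ‖z‖ + ‖w‖ := by
  rcases le_total (Complex.normSq w) (Complex.normSq z) with h | h
  · have habs : |(Mk z w).det| = Complex.normSq z - Complex.normSq w := by
      rw [det_Mk, abs_of_nonneg (by linarith)]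
    have e1 : frobSq (Mk z w) + 2*|(Mk z w).det| = (2 * ‖z‖)^2 := by
      rw [frobSq_Mk, habs, show (2 * ‖z‖)^2 = 4 * (‖z‖)^2 by ring,
        Complex.sq_norm]; ring
    have e2 : frobSq (Mk z w) - 2*|(Mk z w).det| = (2 * ‖w‖)^2 := by
      rw [frobSq_Mk, habs, show (2 * ‖w‖)^2 = 4 * (‖w‖)^2 by ring,
        Complex.sq_norm]; ring
    have s1 : Real.sqrt (frobSq (Mk z w) + 2*|(Mk z w).det|) = 2 * ‖z‖ := by
      rw [e1, Real.sqrt_sq (by positivity)]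
    have s2 : Real.sqrt (frobSq (Mk z w) - 2*|(Mk z w).det|) = 2 * ‖w‖ := by
      rw [e2, Real.sqrt_sq (by positivity)]
    have hzw : ‖w‖ ≤ ‖z‖ := by
      nlinarith [Complex.sq_norm z, Complex.sq_norm w, norm_nonneg z, norm_nonneg w]
    constructor
    · rw [lam1, s1, s2, abs_of_nonneg (by linarith)]; ring
    · rw [lam2, s1, s2]; ring
  · have habs : |(Mk z w).det| = Complex.normSq w - Complex.normSq z := by
      rw [det_Mk, abs_of_nonpos (by linarith)]; ring
    have e1 : frobSq (Mk z w) + 2*|(Mk z w).det| = (2 * ‖w‖)^2 := by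
      rw [frobSq_Mk, habs, show (2 * ‖w‖)^2 = 4 * (‖w‖)^2 by ring,
        Complex.sq_norm]; ring
    have e2 : frobSq (Mk z w) - 2*|(Mk z w).det| = (2 * ‖z‖)^2 := by
      rw [frobSq_Mk, habs, show (2 * ‖z‖)^2 = 4 * (‖z‖)^2 by ring,
        Complex.sq_norm]; ring
    have s1 : Real.sqrt (frobSq (Mk z w) + 2*|(Mk z w).det|) = 2 * ‖w‖ := by
      rw [e1, Real.sqrt_sq (by positivity)]
    have s2 : Real.sqrt (frobSq (Mk z w) - 2*|(Mk z w).det|) = 2 * ‖z‖ := by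
      rw [e2, Real.sqrt_sq (by positivity)]
    have hzw : ‖z‖ ≤ ‖w‖ := by
      nlinarith [Complex.sq_norm z, Complex.sq_norm w, norm_nonneg z, norm_nonneg w]
    constructor
    · rw [lam1, s1, s2, abs_of_nonpos (by linarith)]; ring
    · rw [lam2, s1, s2]; ring

theorem lam1_Mk (z w : ℂ) : lam1 (Mk z w) = |‖z‖ - ‖w‖| := (lam_Mk z w).1
theorem lam2_Mk (z w : ℂ) : lam2 (Mk z w) = ‖z‖ + ‖w‖ := (lam_Mk z w).2

theorem lam_char {a b : ℝ} (ha : 0 ≤ a) (hab : a ≤ b) (ξ : Mat)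
    (h1 : frobSq ξ = a^2 + b^2) (h2 : |ξ.det| = a*b) : lam1 ξ = a ∧ lam2 ξ = b := by
  have e1 : frobSq ξ + 2*|ξ.det| = (a+b)^2 := by rw [h1, h2]; ring
  have e2 : frobSq ξ - 2*|ξ.det| = (b-a)^2 := by rw [h1, h2]; ring
  have s1 : Real.sqrt (frobSq ξ + 2*|ξ.det|) = a + b := by
    rw [e1, Real.sqrt_sq (by linarith)]
  have s2 : Real.sqrt (frobSq ξ - 2*|ξ.det|) = b - a := by
    rw [e2, Real.sqrt_sq (by linarith)]
  constructor <;> simp [lam1, lam2, s1, s2] <;> ring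

theorem lam1_mul_lam2 (ξ : Mat) : lam1 ξ * lam2 ξ = |ξ.det| := by
  obtain ⟨z, w, rfl⟩ := Mk_surj ξ
  rw [lam1_Mk, lam2_Mk, det_Mk]
  rw [show |‖z‖ - ‖w‖| * (‖z‖ + ‖w‖)
      = |(‖z‖ - ‖w‖) * (‖z‖ + ‖w‖)| by
    rw [abs_mul]
    congr 1
    rw [abs_of_nonneg (by positivity)]]
  congr 1
  rw [← Complex.sq_norm, ← Complex.sq_norm]
  ring

theorem lam2_nonneg (ξ : Mat) : 0 ≤ lam2 ξ := by
  have := Real.sqrt_nonneg (frobSq ξ + 2 * |ξ.det|)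
  have := Real.sqrt_nonneg (frobSq ξ - 2 * |ξ.det|)
  rw [lam2]; linarith

theorem lam1_le_lam2 (ξ : Mat) : lam1 ξ ≤ lam2 ξ := by
  have := Real.sqrt_nonneg (frobSq ξ - 2 * |ξ.det|)
  rw [lam1, lam2]; linarith

theorem lam1_nonneg (ξ : Mat) : 0 ≤ lam1 ξ := by
  obtain ⟨z, w, rfl⟩ := Mk_surj ξ
  rw [lam1_Mk]; positivity

/-- A 2×2 matrix which is nonzero and has determinant zero has rank one. -/
theorem rank_one_of (A : Mat) (hA : A ≠ 0) (hd : A.det = 0) : A.rank = 1 := by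
  have hle : A.rank ≤ 2 := by simpa using A.rank_le_card_width
  have hne2 : A.rank ≠ 2 := by
    intro h
    have htop : LinearMap.range A.mulVecLin = ⊤ := by
      apply Submodule.eq_top_of_finrank_eq
      rw [← Matrix.rank, h]
      simp [Module.finrank_pi]
    have hsurj : Function.Surjective A.mulVec := by
      rw [← Matrix.coe_mulVecLin, ← LinearMap.range_eq_top]
      exact htop
    have := Matrix.mulVec_surjective_iff_isUnit.mp hsurj
    rw [Matrix.isUnit_iff_isUnit_det, hd] at this
    simp at this
  have hne0 : A.rank ≠ 0 := by
    intro h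
    apply hA
    have hbot : LinearMap.range A.mulVecLin = ⊥ := by
      rw [Submodule.eq_bot_iff]
      intro x hx
      have h0 : Module.finrank ℝ (LinearMap.range A.mulVecLin) = 0 := h
      rw [Submodule.finrank_eq_zero] at h0
      rw [h0] at hx; exact hx
    ext i j
    have h1 : A.mulVec (Pi.single j 1) = 0 :=
      Submodule.eq_bot_iff _ |>.mp hbot (A.mulVec (Pi.single j 1)) ⟨Pi.single j 1, rfl⟩
    have h2 := congrFun h1 i
    simpa [Matrix.mulVec_single] using h2
  omega

/-- Splitting lemma: if ξ is a convex combination along a rank-one segment of two points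
where f is nonpositive, then f ξ ≤ 0. -/
theorem split {f : Mat → ℝ} (hf : RankOneConvex f) {η₁ η₂ ξ : Mat} (t : ℝ)
    (ht0 : 0 ≤ t) (ht1 : t ≤ 1) (h1 : f η₁ ≤ 0) (h2 : f η₂ ≤ 0)
    (hne : η₁ - η₂ ≠ 0) (hdet : (η₁ - η₂).det = 0)
    (hx : ξ = t • η₁ + (1-t) • η₂) : f ξ ≤ 0 := by
  have hr : (η₁ - η₂).rank = 1 := rank_one_of _ hne hdet
  have := hf η₁ η₂ t ⟨ht0, ht1⟩ hr
  rw [hx]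
  have e1 : t * f η₁ ≤ 0 := mul_nonpos_of_nonneg_of_nonpos ht0 h1
  have e2 : (1-t) * f η₂ ≤ 0 := mul_nonpos_of_nonneg_of_nonpos (by linarith) h2
  linarith

section Diag

variable {a b : ℝ} (ha : 0 < a) (hab : a ≤ b)
variable {E : Set Mat} (hE : E = {ξ | lam1 ξ = a ∧ lam2 ξ = b})
variable {f : Mat → ℝ} (hf : RankOneConvex f) (hf0 : ∀ η ∈ E, f η ≤ 0)

include ha hab hE hf0

/-- upper triangular matrices with the right invariants belong to `E` -/
theorem mem_E (c d t : ℝ) (h1 : c^2 + d^2 + t^2 = a^2 + b^2) (h2 : |c*d| = a*b) :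
    f !![c, t; 0, d] ≤ 0 := by
  apply hf0
  rw [hE]
  refine lam_char ha.le hab _ ?_ ?_
  · simp [frobSq, Fin.sum_univ_two]; linarith
  · rw [show (!![c, t; 0, d] : Mat).det = c * d by
      simp [Matrix.det_fin_two]]
    exact h2

include hf

/-- diagonal matrices with determinant of modulus `ab` and small norm -/
theorem diag_det (c d : ℝ) (h2 : |c*d| = a*b) (h3 : c^2 + d^2 ≤ a^2 + b^2) :
    f !![c, 0; 0, d] ≤ 0 := by
  set t := Real.sqrt (a^2 + b^2 - c^2 - d^2) with htdef
  have ht2 : t^2 = a^2 + b^2 - c^2 - d^2 := Real.sq_sqrt (by linarith)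
  by_cases ht : t = 0
  · have : c^2 + d^2 = a^2 + b^2 := by rw [ht] at ht2; nlinarith
    have := mem_E ha hab hE hf0 c d 0 (by linarith) h2
    simpa using this
  · refine split hf (f := f) (η₁ := !![c, t; 0, d]) (η₂ := !![c, -t; 0, d]) (1/2 : ℝ)
      (by norm_num) (by norm_num) ?_ ?_ ?_ ?_ ?_
    · exact mem_E ha hab hE hf0 c d t (by linarith) h2
    · exact mem_E ha hab hE hf0 c d (-t) (by nlinarith) h2
    · intro hcon
      have := congrFun (congrFun hcon 0) 1
      simp [Matrix.sub_apply] at this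
      exact ht (by linarith)
    · simp [Matrix.det_fin_two, Matrix.sub_apply]
    · ext i j
      fin_cases i <;> fin_cases j <;>
        simp [Matrix.add_apply, Matrix.smul_apply, smul_eq_mul] <;> ring

/-- diagonal matrices with first entry at most `a` and second of modulus `b` -/
theorem diag_first (x d : ℝ) (hx : |x| ≤ a) (hd : |d| = b) : f !![x, 0; 0, d] ≤ 0 := by
  have hd2 : d^2 = b^2 := by rw [← sq_abs, hd]
  refine split hf (f := f) (η₁ := !![a, 0; 0, d]) (η₂ := !![-a, 0; 0, d]) ((x+a)/(2*a))
    (by rw [abs_le] at hx; exact div_nonneg (by linarith [hx.1]) (by linarith)) ?_ ?_ ?_ ?_ ?_ ?_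
  · rw [abs_le] at hx
    rw [div_le_one (by linarith)]; linarith
  · have := mem_E ha hab hE hf0 a d 0 (by linarith) (by rw [abs_mul, abs_of_nonneg ha.le, hd])
    simpa using this
  · have := mem_E ha hab hE hf0 (-a) d 0 (by linarith)
      (by rw [abs_mul, abs_neg, abs_of_nonneg ha.le, hd])
    simpa using this
  · intro hcon
    have := congrFun (congrFun hcon 0) 0
    simp [Matrix.sub_apply] at this
    linarith
  · simp [Matrix.det_fin_two, Matrix.sub_apply]
  · ext i j
    fin_cases i <;> fin_cases j <;>
      simp [Matrix.add_apply, Matrix.smul_apply, smul_eq_mul] <;>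
      field_simp <;> ring

/-- diagonal matrices with second entry at most `a` and first of modulus `b` -/
theorem diag_second (c y : ℝ) (hy : |y| ≤ a) (hc : |c| = b) : f !![c, 0; 0, y] ≤ 0 := by
  have hc2 : c^2 = b^2 := by rw [← sq_abs, hc]
  refine split hf (f := f) (η₁ := !![c, 0; 0, a]) (η₂ := !![c, 0; 0, -a]) ((y+a)/(2*a))
    (by rw [abs_le] at hy; exact div_nonneg (by linarith [hy.1]) (by linarith)) ?_ ?_ ?_ ?_ ?_ ?_
  · rw [abs_le] at hy
    rw [div_le_one (by linarith)]; linarith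
  · have := mem_E ha hab hE hf0 c a 0 (by linarith)
      (by rw [abs_mul, abs_of_nonneg ha.le, hc]; ring)
    simpa using this
  · have := mem_E ha hab hE hf0 c (-a) 0 (by linarith)
      (by rw [abs_mul, abs_neg, abs_of_nonneg ha.le, hc]; ring)
    simpa using this
  · intro hcon
    have := congrFun (congrFun hcon 1) 1
    simp [Matrix.sub_apply] at this
    linarith
  · simp [Matrix.det_fin_two, Matrix.sub_apply]
  · ext i j
    fin_cases i <;> fin_cases j <;>
      simp [Matrix.add_apply, Matrix.smul_apply, smul_eq_mul] <;>
      field_simp <;> ring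

/-- the main diagonal lemma -/
theorem diag_main (x y : ℝ) (hx : |x| ≤ b) (hy : |y| ≤ b) (hxy : |x*y| ≤ a*b) :
    f !![x, 0; 0, y] ≤ 0 := by
  have hb : 0 < b := lt_of_lt_of_le ha hab
  by_cases hxa : |x| ≤ a
  · -- split the second entry between b and -b
    refine split hf (f := f) (η₁ := !![x, 0; 0, b]) (η₂ := !![x, 0; 0, -b]) ((y+b)/(2*b))
      (by rw [abs_le] at hy; exact div_nonneg (by linarith [hy.1]) (by linarith)) ?_ ?_ ?_ ?_ ?_ ?_
    · rw [abs_le] at hy; rw [div_le_one (by linarith)]; linarith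
    · exact diag_first ha hab hE hf hf0 x b hxa (abs_of_nonneg hb.le)
    · exact diag_first ha hab hE hf hf0 x (-b) hxa (by rw [abs_neg, abs_of_nonneg hb.le])
    · intro hcon
      have := congrFun (congrFun hcon 1) 1
      simp [Matrix.sub_apply] at this
      linarith
    · simp [Matrix.det_fin_two, Matrix.sub_apply]
    · ext i j
      fin_cases i <;> fin_cases j <;>
        simp [Matrix.add_apply, Matrix.smul_apply, smul_eq_mul] <;>
        field_simp <;> ring
  · by_cases hya : |y| ≤ a
    · -- split the first entry between b and -b
      refine split hf (f := f) (η₁ := !![b, 0; 0, y]) (η₂ := !![-b, 0; 0, y]) ((x+b)/(2*b))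
        (by rw [abs_le] at hx; exact div_nonneg (by linarith [hx.1]) (by linarith)) ?_ ?_ ?_ ?_ ?_ ?_
      · rw [abs_le] at hx; rw [div_le_one (by linarith)]; linarith
      · exact diag_second ha hab hE hf hf0 b y hya (abs_of_nonneg hb.le)
      · exact diag_second ha hab hE hf hf0 (-b) y hya (by rw [abs_neg, abs_of_nonneg hb.le])
      · intro hcon
        have := congrFun (congrFun hcon 0) 0
        simp [Matrix.sub_apply] at this
        linarith
      · simp [Matrix.det_fin_two, Matrix.sub_apply]
      · ext i j
        fin_cases i <;> fin_cases j <;>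
          simp [Matrix.add_apply, Matrix.smul_apply, smul_eq_mul] <;>
          field_simp <;> ring
    · -- both |x| > a and |y| > a; split second entry between ±(ab/|x|)
      push_neg at hxa hya
      have hx0 : (0:ℝ) < |x| := lt_trans ha hxa
      obtain ⟨m, hm0, hxm⟩ : ∃ m : ℝ, 0 < m ∧ |x| * m = a * b :=
        ⟨a*b/|x|, div_pos (by positivity) hx0, by field_simp⟩
      have hym : |y| ≤ m := by
        have h4 : |y| * |x| ≤ m * |x| := by
          calc |y| * |x| = |x*y| := by rw [abs_mul]; ring
          _ ≤ a*b := hxy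
          _ = m * |x| := by rw [← hxm]; ring
        exact le_of_mul_le_mul_right h4 hx0
      have hdetm : |x*m| = a*b := by
        rw [abs_mul, abs_of_nonneg hm0.le, hxm]
      have hsq : x^2 + m^2 ≤ a^2 + b^2 := by
        have h1 : a ≤ |x| := hxa.le
        have h2 : |x| ≤ b := hx
        have hu2 : 0 < |x|^2 := by positivity
        have key : 0 ≤ (|x|^2 - a^2) * (b^2 - |x|^2) :=
          mul_nonneg (by nlinarith) (by nlinarith)
        have hm2 : |x|^2 * m^2 = a^2 * b^2 := by
          have h5 := congrArg (fun r : ℝ => r^2) hxm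
          simpa [mul_pow] using h5
        nlinarith [key, hm2, hu2, sq_abs x]
      refine split hf (f := f) (η₁ := !![x, 0; 0, m]) (η₂ := !![x, 0; 0, -m]) ((y+m)/(2*m))
        (by rw [abs_le] at hym; exact div_nonneg (by linarith [hym.1]) (by linarith)) ?_ ?_ ?_ ?_ ?_ ?_
      · rw [abs_le] at hym; rw [div_le_one (by linarith)]; linarith
      · exact diag_det ha hab hE hf hf0 x m hdetm hsq
      · exact diag_det ha hab hE hf hf0 x (-m)
          (by rw [show x * -m = -(x*m) by ring, abs_neg]; exact hdetm) (by nlinarith)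
      · intro hcon
        have := congrFun (congrFun hcon 1) 1
        simp [Matrix.sub_apply] at this
        linarith
      · simp [Matrix.det_fin_two, Matrix.sub_apply]
      · ext i j
        fin_cases i <;> fin_cases j <;>
          simp [Matrix.add_apply, Matrix.smul_apply, smul_eq_mul] <;>
          field_simp <;> ring

end Diag

/-- the determinant is affine along rank-one lines -/
theorem det_affine (ξ η : Mat) (h : (ξ - η).det = 0) (t : ℝ) :
    (t • ξ + (1-t) • η).det = t * ξ.det + (1-t) * η.det := by
  simp only [Matrix.det_fin_two, Matrix.add_apply, Matrix.smul_apply, Matrix.sub_apply,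
    smul_eq_mul] at h ⊢
  linear_combination (-(t*(1-t))) * h

theorem polyconvex_rankOneConvex {f : Mat → ℝ} (hpc : PolyconvexFun f) : RankOneConvex f := by
  obtain ⟨g, hg, hfg⟩ := hpc
  intro ξ η t ht hr
  have hdet0 : (ξ - η).det = 0 := by
    by_contra h
    have h1 : IsUnit (ξ - η) := (Matrix.isUnit_iff_isUnit_det _).2 (isUnit_iff_ne_zero.2 h)
    have h2 := Matrix.rank_of_isUnit _ h1
    rw [hr] at h2
    simp at h2
  have hdet := det_affine ξ η hdet0 t
  have hcx := hg.2 (Set.mem_univ ((ξ, ξ.det) : Mat × ℝ)) (Set.mem_univ ((η, η.det) : Mat × ℝ))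
    ht.1 (sub_nonneg.mpr ht.2) (by ring)
  have hpair : ((t • ξ + (1-t) • η : Mat), t * ξ.det + (1-t) * η.det)
      = t • ((ξ, ξ.det) : Mat × ℝ) + (1-t) • ((η, η.det) : Mat × ℝ) := by
    simp [Prod.ext_iff, smul_eq_mul]
  calc f (t • ξ + (1-t) • η) = g (t • ξ + (1-t) • η, (t • ξ + (1-t) • η).det) := hfg _
    _ = g (t • ((ξ, ξ.det) : Mat × ℝ) + (1-t) • ((η, η.det) : Mat × ℝ)) := by
        rw [hdet, hpair]
    _ ≤ t * g (ξ, ξ.det) + (1-t) * g (η, η.det) := by simpa using hcx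
    _ = t * f ξ + (1-t) * f η := by rw [hfg, hfg]

theorem lam2_smul_add (s t : ℝ) (hs : 0 ≤ s) (ht : 0 ≤ t) (ξ η : Mat) :
    lam2 (s • ξ + t • η) ≤ s * lam2 ξ + t * lam2 η := by
  obtain ⟨z, w, rfl⟩ := Mk_surj ξ
  obtain ⟨z', w', rfl⟩ := Mk_surj η
  rw [Mk_smul, Mk_smul, Mk_add, lam2_Mk, lam2_Mk, lam2_Mk]
  have h1 : ‖↑s*z + ↑t*z'‖ ≤ s * ‖z‖ + t * ‖z'‖ := by
    calc ‖↑s*z + ↑t*z'‖ ≤ ‖↑s*z‖ + ‖↑t*z'‖ :=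
      norm_add_le _ _
    _ = s * ‖z‖ + t * ‖z'‖ := by
        rw [norm_mul, norm_mul, Complex.norm_real, Complex.norm_real, Real.norm_eq_abs, Real.norm_eq_abs,
          abs_of_nonneg hs, abs_of_nonneg ht]
  have h2 : ‖↑s*w + ↑t*w'‖ ≤ s * ‖w‖ + t * ‖w'‖ := by
    calc ‖↑s*w + ↑t*w'‖ ≤ ‖↑s*w‖ + ‖↑t*w'‖ :=
      norm_add_le _ _
    _ = s * ‖w‖ + t * ‖w'‖ := by
        rw [norm_mul, norm_mul, Complex.norm_real, Complex.norm_real, Real.norm_eq_abs, Real.norm_eq_abs,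
          abs_of_nonneg hs, abs_of_nonneg ht]
  linarith

theorem convexOn_absdet (c : ℝ) : ConvexOn ℝ Set.univ (fun p : Mat × ℝ => |p.2| - c) := by
  refine ⟨convex_univ, ?_⟩
  intro p _ q _ s t hs ht hst
  show |(s • p + t • q).2| - c ≤ s * (|p.2| - c) + t * (|q.2| - c)
  have h2 : (s • p + t • q).2 = s * p.2 + t * q.2 := rfl
  rw [h2]
  have habs : |s * p.2 + t * q.2| ≤ s * |p.2| + t * |q.2| := by
    calc |s * p.2 + t * q.2| ≤ |s * p.2| + |t * q.2| := abs_add_le _ _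
    _ = s * |p.2| + t * |q.2| := by
        rw [abs_mul, abs_mul, abs_of_nonneg hs, abs_of_nonneg ht]
  have hc : s*c + t*c = c := by linear_combination c * hst
  linarith [habs, hc]

theorem convexOn_lam2 (c : ℝ) : ConvexOn ℝ Set.univ (fun p : Mat × ℝ => lam2 p.1 - c) := by
  refine ⟨convex_univ, ?_⟩
  intro p _ q _ s t hs ht hst
  show lam2 (s • p + t • q).1 - c ≤ s * (lam2 p.1 - c) + t * (lam2 q.1 - c)
  have h1 : (s • p + t • q).1 = s • p.1 + t • q.1 := rfl
  rw [h1]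
  have hsa := lam2_smul_add s t hs ht p.1 q.1
  have hc : s*c + t*c = c := by linear_combination c * hst
  linarith [hsa, hc]

/-- Singular value decomposition for 2×2 matrices. -/
theorem svd (ξ : Mat) : ∃ (α β : ℂ) (x y : ℝ), ‖α‖ = 1 ∧ ‖β‖ = 1 ∧
    x = lam2 ξ ∧ |y| = lam1 ξ ∧ ξ = Mk α 0 * !![x, 0; 0, y] * Mk β 0 := by
  obtain ⟨z, w, rfl⟩ := Mk_surj ξ
  obtain ⟨u, hu1, hu2⟩ : ∃ u : ℂ, ‖u‖ = 1 ∧ u * (‖z‖ : ℂ) = z := by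
    by_cases hz : z = 0
    · exact ⟨1, by simp, by simp [hz]⟩
    · refine ⟨z / (‖z‖ : ℂ), ?_, ?_⟩
      · rw [norm_div, Complex.norm_real, Real.norm_eq_abs, abs_of_nonneg (norm_nonneg z), div_self]
        exact norm_ne_zero_iff.mpr hz
      · have hne : ((‖z‖ : ℝ) : ℂ) ≠ 0 := by
          exact_mod_cast norm_ne_zero_iff.mpr hz
        field_simp
  obtain ⟨v, hv1, hv2⟩ : ∃ v : ℂ, ‖v‖ = 1 ∧ v * (‖w‖ : ℂ) = w := by
    by_cases hw : w = 0
    · exact ⟨1, by simp, by simp [hw]⟩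
    · refine ⟨w / (‖w‖ : ℂ), ?_, ?_⟩
      · rw [norm_div, Complex.norm_real, Real.norm_eq_abs, abs_of_nonneg (norm_nonneg w), div_self]
        exact norm_ne_zero_iff.mpr hw
      · have hne : ((‖w‖ : ℝ) : ℂ) ≠ 0 := by
          exact_mod_cast norm_ne_zero_iff.mpr hw
        field_simp
  obtain ⟨α, hα⟩ := IsAlgClosed.exists_pow_nat_eq (u * v) (n := 2) (by norm_num)
  have hαabs : ‖α‖ = 1 := by
    have h1 : (‖α‖)^2 = 1 := by
      rw [← norm_pow, hα, norm_mul, hu1, hv1]; norm_num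
    nlinarith [norm_nonneg α]
  have hα0 : α ≠ 0 := by
    intro h; rw [h] at hαabs; simp at hαabs
  have hcu : (starRingEnd ℂ) u * u = 1 := by
    rw [mul_comm, Complex.mul_conj, Complex.normSq_eq_norm_sq, hu1]
    norm_num
  have hconjα : (starRingEnd ℂ) α = α⁻¹ := by
    apply eq_inv_of_mul_eq_one_left
    rw [mul_comm, Complex.mul_conj, Complex.normSq_eq_norm_sq, hαabs]
    norm_num
  refine ⟨α, u/α, ‖z‖ + ‖w‖, ‖z‖ - ‖w‖,
    hαabs, ?_, (lam2_Mk z w).symm, (lam1_Mk z w).symm, ?_⟩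
  · rw [norm_div, hu1, hαabs]; norm_num
  · rw [show (!![‖z‖ + ‖w‖, 0; 0, ‖z‖ - ‖w‖] : Mat)
        = Mk (‖z‖ : ℂ) (‖w‖ : ℂ) from (Mk_diag _ _).symm]
    rw [Mk_mul, Mk_mul]
    simp only [map_zero, mul_zero, zero_mul, add_zero, zero_add, map_div₀, hconjα, inv_inv]
    have h9 : α * (‖z‖ : ℂ) * (u / α) = u * (‖z‖ : ℂ) := by
      field_simp
    have e1 : α * (‖z‖ : ℂ) * (u / α) = z := h9.trans hu2
    have e2 : α * (‖w‖ : ℂ) * ((starRingEnd ℂ) u / α⁻¹) = w := by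
      have hexp : α * ↑(‖w‖) * ((starRingEnd ℂ) u * α) = w := by
        linear_combination ((starRingEnd ℂ) u * (‖w‖ : ℂ)) * hα
          + (v * (‖w‖ : ℂ)) * hcu + hv2
      calc α * ↑(‖w‖) * ((starRingEnd ℂ) u / α⁻¹)
          = α * ↑(‖w‖) * ((starRingEnd ℂ) u * α) := by
            rw [div_eq_mul_inv, inv_inv]
        _ = w := hexp
    rw [e1, e2]

end SVhull

theorem pcHull_eq_rcHull_singleton' (a b : ℝ) (ha : 0 < a) (hab : a ≤ b)
    (E : Set (Matrix (Fin 2) (Fin 2) ℝ)) (hE : E = {ξ | lam1 ξ = a ∧ lam2 ξ = b}) :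
    pcHull E = rcHull E ∧
    pcHull E = {ξ | lam1 ξ * lam2 ξ ≤ a * b ∧ lam2 ξ ≤ b} := by
  have hrc_pc : rcHull E ⊆ pcHull E := by
    intro ξ hξ f hpc hf0
    exact hξ f (SVhull.polyconvex_rankOneConvex hpc) hf0
  have hpc_K : pcHull E ⊆ {ξ | lam1 ξ * lam2 ξ ≤ a * b ∧ lam2 ξ ≤ b} := by
    intro ξ hξ
    constructor
    · have h1 := hξ (fun η => |η.det| - a*b)
        ⟨fun p => |p.2| - a*b, SVhull.convexOn_absdet (a*b), fun _ => rfl⟩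
        (fun η hη => by
          rw [hE] at hη
          have hm := SVhull.lam1_mul_lam2 η
          rw [hη.1, hη.2] at hm
          simp only [← hm]
          linarith)
      have h1' : |ξ.det| - a*b ≤ 0 := h1
      rw [SVhull.lam1_mul_lam2]
      linarith
    · have h2 := hξ (fun η => lam2 η - b)
        ⟨fun p => lam2 p.1 - b, SVhull.convexOn_lam2 b, fun _ => rfl⟩
        (fun η hη => by
          rw [hE] at hη
          have := hη.2
          simp only [this]
          linarith)
      have h2' : lam2 ξ - b ≤ 0 := h2
      linarith
  have hK_rc : {ξ | lam1 ξ * lam2 ξ ≤ a * b ∧ lam2 ξ ≤ b} ⊆ rcHull E := by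
    intro ξ hξ f hf hf0
    obtain ⟨hd, hl2⟩ := hξ
    obtain ⟨α, β, x, y, hα, hβ, hx, hy, heq⟩ := SVhull.svd ξ
    have hdetR : (SVhull.Mk α 0).det = 1 := by
      rw [SVhull.det_Mk]; simp [Complex.normSq_eq_norm_sq, hα]
    have hdetS : (SVhull.Mk β 0).det = 1 := by
      rw [SVhull.det_Mk]; simp [Complex.normSq_eq_norm_sq, hβ]
    have hg : RankOneConvex (fun η => f (SVhull.Mk α 0 * η * SVhull.Mk β 0)) := by
      intro ξ' η' t ht hr
      have hexp : SVhull.Mk α 0 * (t • ξ' + (1-t) • η') * SVhull.Mk β 0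
          = t • (SVhull.Mk α 0 * ξ' * SVhull.Mk β 0)
            + (1-t) • (SVhull.Mk α 0 * η' * SVhull.Mk β 0) := by
        simp [Matrix.mul_add, Matrix.add_mul, Matrix.mul_smul, Matrix.smul_mul]
      have hfact : (SVhull.Mk α 0 * ξ' * SVhull.Mk β 0) - (SVhull.Mk α 0 * η' * SVhull.Mk β 0)
          = SVhull.Mk α 0 * (ξ' - η') * SVhull.Mk β 0 := by
        simp [Matrix.mul_sub, Matrix.sub_mul]
      have hrank : ((SVhull.Mk α 0 * ξ' * SVhull.Mk β 0)
          - (SVhull.Mk α 0 * η' * SVhull.Mk β 0)).rank = 1 := by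
        rw [hfact,
          Matrix.rank_mul_eq_left_of_isUnit_det _ _ (by rw [hdetS]; exact isUnit_one),
          Matrix.rank_mul_eq_right_of_isUnit_det _ _ (by rw [hdetR]; exact isUnit_one)]
        exact hr
      have hineq := hf _ _ t ht hrank
      show f (SVhull.Mk α 0 * (t • ξ' + (1-t) • η') * SVhull.Mk β 0)
        ≤ t * f (SVhull.Mk α 0 * ξ' * SVhull.Mk β 0)
          + (1-t) * f (SVhull.Mk α 0 * η' * SVhull.Mk β 0)
      rw [hexp]
      exact hineq
    have hg0 : ∀ η ∈ E, (fun η => f (SVhull.Mk α 0 * η * SVhull.Mk β 0)) η ≤ 0 := by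
      intro η hη
      show f (SVhull.Mk α 0 * η * SVhull.Mk β 0) ≤ 0
      apply hf0
      obtain ⟨z', w', rfl⟩ := SVhull.Mk_surj η
      rw [hE] at hη
      obtain ⟨h1, h2⟩ := hη
      rw [SVhull.lam1_Mk] at h1
      rw [SVhull.lam2_Mk] at h2
      have hprod : SVhull.Mk α 0 * SVhull.Mk z' w' * SVhull.Mk β 0
          = SVhull.Mk (α * z' * β) (α * w' * (starRingEnd ℂ) β) := by
        rw [SVhull.Mk_mul, SVhull.Mk_mul]
        simp only [map_zero, mul_zero, zero_mul, add_zero, zero_add]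
      rw [hE, hprod, Set.mem_setOf_eq, SVhull.lam1_Mk, SVhull.lam2_Mk]
      have hz : ‖α * z' * β‖ = ‖z'‖ := by
        rw [norm_mul, norm_mul, hα, hβ]; ring
      have hw : ‖α * w' * (starRingEnd ℂ) β‖ = ‖w'‖ := by
        rw [norm_mul, norm_mul, hα, Complex.norm_conj, hβ]; ring
      rw [hz, hw]
      exact ⟨h1, h2⟩
    have hxb : |x| ≤ b := by
      rw [hx, abs_of_nonneg (SVhull.lam2_nonneg ξ)]; exact hl2
    have hyb : |y| ≤ b := by
      rw [hy]; exact le_trans (SVhull.lam1_le_lam2 ξ) hl2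
    have hxyb : |x*y| ≤ a*b := by
      rw [abs_mul]
      calc |x| * |y| = lam2 ξ * lam1 ξ := by
            rw [hy, hx, abs_of_nonneg (SVhull.lam2_nonneg ξ)]
        _ = lam1 ξ * lam2 ξ := mul_comm _ _
        _ ≤ a*b := hd
    have hmain := SVhull.diag_main ha hab hE hg hg0 x y hxb hyb hxyb
    rw [heq]
    exact hmain
  exact ⟨Set.Subset.antisymm (hpc_K.trans hK_rc) hrc_pc,
    Set.Subset.antisymm hpc_K (hK_rc.trans hrc_pc)⟩


/-- the hulls of the set of matrices with prescribed singular values `a ≤ b`. -/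
theorem pcHull_eq_rcHull_singleton (a b : ℝ) (ha : 0 < a) (hab : a ≤ b)
    (E : Set (Matrix (Fin 2) (Fin 2) ℝ)) (hE : E = {ξ | lam1 ξ = a ∧ lam2 ξ = b}) :
    pcHull E = rcHull E ∧
    pcHull E = {ξ | lam1 ξ * lam2 ξ ≤ a * b ∧ lam2 ξ ≤ b} := by
  exact pcHull_eq_rcHull_singleton' a b ha hab E hE
end

section
/- Let K ⊂ {(x,y) ∈ ℝ² : 0 < x ≤ y} be a compact set, let E := {ξ ∈ ℝ^{2×2} : (λ₁(ξ), λ₂(ξ)) ∈ K}, and let (U_n) be the sequence of open sets from the standard construction (with any decreasing sequence 0 < ε_n < a₀/2, ε_n → 0, where a₀ = min_{(a,b)∈K} a). Then (U_n) is an in-approximation of E; in particular U_n ⊆ (U_{n+1})^{rc} for every n and sup_{ξ ∈ U_n} dist(ξ, E) → 0 as n → ∞. -/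
open scoped BigOperators


noncomputable def matOf (p q r s : ℝ) : Matrix (Fin 2) (Fin 2) ℝ := !![p + r, -q + s; q + s, p - r]

noncomputable def Amap (u₁ u₂ v₁ v₂ a b : ℝ) : Matrix (Fin 2) (Fin 2) ℝ :=
  matOf ((a + b) / 2 * u₁) ((a + b) / 2 * u₂) ((a - b) / 2 * v₁) ((a - b) / 2 * v₂)

lemma frobSq_matOf (p q r s : ℝ) :
    frobSq (matOf p q r s) = 2 * (p ^ 2 + q ^ 2) + 2 * (r ^ 2 + s ^ 2) := by
  simp [frobSq, matOf, Fin.sum_univ_two]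
  ring

lemma det_matOf (p q r s : ℝ) :
    (matOf p q r s).det = (p ^ 2 + q ^ 2) - (r ^ 2 + s ^ 2) := by
  simp [matOf, Matrix.det_fin_two_of]
  ring

lemma matOf_eq_zero {p q r s : ℝ} (h : matOf p q r s = 0) :
    p = 0 ∧ q = 0 ∧ r = 0 ∧ s = 0 := by
  have h00 := congrFun (congrFun h 0) 0
  have h01 := congrFun (congrFun h 0) 1
  have h10 := congrFun (congrFun h 1) 0
  have h11 := congrFun (congrFun h 1) 1
  simp [matOf] at h00 h01 h10 h11
  refine ⟨by linarith, by linarith, by linarith, by linarith⟩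

lemma frobSq_Amap {u₁ u₂ v₁ v₂ : ℝ} (hu : u₁ ^ 2 + u₂ ^ 2 = 1) (hv : v₁ ^ 2 + v₂ ^ 2 = 1)
    (a b : ℝ) : frobSq (Amap u₁ u₂ v₁ v₂ a b) = a ^ 2 + b ^ 2 := by
  rw [Amap, frobSq_matOf]
  linear_combination (((a + b) / 2) ^ 2 * 2) * hu + (((a - b) / 2) ^ 2 * 2) * hv

lemma det_Amap {u₁ u₂ v₁ v₂ : ℝ} (hu : u₁ ^ 2 + u₂ ^ 2 = 1) (hv : v₁ ^ 2 + v₂ ^ 2 = 1)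
    (a b : ℝ) : (Amap u₁ u₂ v₁ v₂ a b).det = a * b := by
  rw [Amap, det_matOf]
  linear_combination (((a + b) / 2) ^ 2) * hu - (((a - b) / 2) ^ 2) * hv

lemma lam_eq {ξ : Matrix (Fin 2) (Fin 2) ℝ} {a b : ℝ} (hf : frobSq ξ = a ^ 2 + b ^ 2)
    (hd : |ξ.det| = |a * b|) : lam1 ξ = min |a| |b| ∧ lam2 ξ = max |a| |b| := by
  have h1 : Real.sqrt (frobSq ξ + 2 * |ξ.det|) = |a| + |b| := by
    rw [hf, hd, show a ^ 2 + b ^ 2 + 2 * |a * b| = (|a| + |b|) ^ 2 by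
      linear_combination (-1 : ℝ) * sq_abs a - sq_abs b + 2 * abs_mul a b]
    exact Real.sqrt_sq (by positivity)
  have h2 : Real.sqrt (frobSq ξ - 2 * |ξ.det|) = |(|a| - |b|)| := by
    rw [hf, hd, show a ^ 2 + b ^ 2 - 2 * |a * b| = (|a| - |b|) ^ 2 by
      linear_combination (-1 : ℝ) * sq_abs a - sq_abs b - 2 * abs_mul a b]
    exact Real.sqrt_sq_eq_abs _
  rw [lam1, lam2, h1, h2]
  rcases le_total (|a|) (|b|) with h | h
  · rw [abs_of_nonpos (sub_nonpos.2 h), min_eq_left h, max_eq_right h]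
    constructor <;> ring
  · rw [abs_of_nonneg (sub_nonneg.2 h), min_eq_right h, max_eq_left h]
    constructor <;> ring

lemma lam1_Amap {u₁ u₂ v₁ v₂ : ℝ} (hu : u₁ ^ 2 + u₂ ^ 2 = 1) (hv : v₁ ^ 2 + v₂ ^ 2 = 1)
    (a b : ℝ) : lam1 (Amap u₁ u₂ v₁ v₂ a b) = min |a| |b| :=
  (lam_eq (frobSq_Amap hu hv a b) (by rw [det_Amap hu hv])).1

lemma lam2_Amap {u₁ u₂ v₁ v₂ : ℝ} (hu : u₁ ^ 2 + u₂ ^ 2 = 1) (hv : v₁ ^ 2 + v₂ ^ 2 = 1)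
    (a b : ℝ) : lam2 (Amap u₁ u₂ v₁ v₂ a b) = max |a| |b| :=
  (lam_eq (frobSq_Amap hu hv a b) (by rw [det_Amap hu hv])).2

lemma Amap_combo (u₁ u₂ v₁ v₂ t a b a' b' : ℝ) :
    t • Amap u₁ u₂ v₁ v₂ a b + (1 - t) • Amap u₁ u₂ v₁ v₂ a' b' =
      Amap u₁ u₂ v₁ v₂ (t * a + (1 - t) * a') (t * b + (1 - t) * b') := by
  ext i j
  fin_cases i <;> fin_cases j <;>
    simp [Amap, matOf, Matrix.add_apply, Matrix.smul_apply] <;> ring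

lemma Amap_sub (u₁ u₂ v₁ v₂ a b a' b' : ℝ) :
    Amap u₁ u₂ v₁ v₂ a b - Amap u₁ u₂ v₁ v₂ a' b' = Amap u₁ u₂ v₁ v₂ (a - a') (b - b') := by
  ext i j
  fin_cases i <;> fin_cases j <;>
    simp [Amap, matOf, Matrix.sub_apply] <;> ring

lemma Amap_ne_zero {u₁ u₂ v₁ v₂ a b : ℝ} (hu : u₁ ^ 2 + u₂ ^ 2 = 1)
    (hv : v₁ ^ 2 + v₂ ^ 2 = 1) (hab : a ≠ 0 ∨ b ≠ 0) : Amap u₁ u₂ v₁ v₂ a b ≠ 0 := by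
  intro h
  obtain ⟨h1, h2, h3, h4⟩ := matOf_eq_zero h
  have hu' : u₁ ≠ 0 ∨ u₂ ≠ 0 := by
    by_contra hc
    push_neg at hc
    rw [hc.1, hc.2] at hu; norm_num at hu
  have hv' : v₁ ≠ 0 ∨ v₂ ≠ 0 := by
    by_contra hc
    push_neg at hc
    rw [hc.1, hc.2] at hv; norm_num at hv
  have hab1 : (a + b) / 2 = 0 := by
    rcases hu' with h' | h'
    · rcases mul_eq_zero.1 h1 with h'' | h''
      · exact h''
      · exact absurd h'' h'
    · rcases mul_eq_zero.1 h2 with h'' | h''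
      · exact h''
      · exact absurd h'' h'
  have hab2 : (a - b) / 2 = 0 := by
    rcases hv' with h' | h'
    · rcases mul_eq_zero.1 h3 with h'' | h''
      · exact h''
      · exact absurd h'' h'
    · rcases mul_eq_zero.1 h4 with h'' | h''
      · exact h''
      · exact absurd h'' h'
  rcases hab with h' | h' <;> [exact h' (by linarith); exact h' (by linarith)]

lemma rank_one_of_det_zero {M : Matrix (Fin 2) (Fin 2) ℝ} (h0 : M ≠ 0) (hd : M.det = 0) :
    M.rank = 1 := by
  have hle : M.rank ≤ 1 := by
    obtain ⟨v, hMv, hv⟩ := Matrix.exists_mulVec_eq_zero_iff.2 hd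
    have hrn := LinearMap.finrank_range_add_finrank_ker M.mulVecLin
    have hfin : Module.finrank ℝ (Fin 2 → ℝ) = 2 := Module.finrank_fin_fun ℝ
    have hker : 0 < Module.finrank ℝ (LinearMap.ker M.mulVecLin) := by
      rw [Module.finrank_pos_iff]
      refine ⟨⟨v, LinearMap.mem_ker.2 (by simpa using hv)⟩, 0, ?_⟩
      simp [Subtype.ext_iff, hMv]
    rw [Matrix.rank]
    omega
  have hne : M.rank ≠ 0 := by
    intro h
    apply h0
    have hb : LinearMap.range M.mulVecLin = ⊥ := Submodule.finrank_eq_zero.1 h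
    have hz : M.mulVecLin = 0 := LinearMap.range_eq_bot.1 hb
    ext i j
    have := congrFun (congrArg DFunLike.coe hz) (Pi.single j 1)
    have h2 := congrFun this i
    simpa using h2
  omega

lemma exists_rep (ξ : Matrix (Fin 2) (Fin 2) ℝ) :
    ∃ u₁ u₂ v₁ v₂ y₀ : ℝ, u₁ ^ 2 + u₂ ^ 2 = 1 ∧ v₁ ^ 2 + v₂ ^ 2 = 1 ∧
      ξ = Amap u₁ u₂ v₁ v₂ (lam2 ξ) y₀ ∧ |y₀| = lam1 ξ ∧ 0 ≤ lam2 ξ := by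
  set p := (ξ 0 0 + ξ 1 1) / 2 with hp
  set q := (ξ 1 0 - ξ 0 1) / 2 with hq
  set r := (ξ 0 0 - ξ 1 1) / 2 with hr
  set s := (ξ 1 0 + ξ 0 1) / 2 with hs
  have hξ : ξ = matOf p q r s := by
    ext i j
    fin_cases i <;> fin_cases j <;> simp [matOf, hp, hq, hr, hs] <;> ring
  set m := Real.sqrt (p ^ 2 + q ^ 2) with hmdef
  set n := Real.sqrt (r ^ 2 + s ^ 2) with hndef
  have hm : 0 ≤ m := Real.sqrt_nonneg _
  have hn : 0 ≤ n := Real.sqrt_nonneg _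
  have hm2 : m ^ 2 = p ^ 2 + q ^ 2 := Real.sq_sqrt (by positivity)
  have hn2 : n ^ 2 = r ^ 2 + s ^ 2 := Real.sq_sqrt (by positivity)
  have hexu : ∀ a b : ℝ, ∀ c : ℝ, 0 ≤ c → c ^ 2 = a ^ 2 + b ^ 2 →
      ∃ w₁ w₂ : ℝ, w₁ ^ 2 + w₂ ^ 2 = 1 ∧ c * w₁ = a ∧ c * w₂ = b := by
    intro a b c hc hc2
    by_cases hc0 : c = 0
    · have hab : a ^ 2 + b ^ 2 = 0 := by rw [← hc2, hc0]; ring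
      have ha : a = 0 := by nlinarith
      have hb : b = 0 := by nlinarith
      exact ⟨1, 0, by norm_num, by simp [hc0, ha], by simp [hc0, hb]⟩
    · refine ⟨a / c, b / c, ?_, by field_simp, by field_simp⟩
      field_simp
      linarith [hc2]
  obtain ⟨u₁, u₂, hu, hup, huq⟩ := hexu p q m hm hm2
  obtain ⟨v₁, v₂, hv, hvr, hvs⟩ := hexu r s n hn hn2
  have hfro : frobSq ξ = (m + n) ^ 2 + (m - n) ^ 2 := by
    rw [hξ, frobSq_matOf, ← hm2, ← hn2]; ring
  have hdet : |ξ.det| = |(m + n) * (m - n)| := by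
    rw [hξ, det_matOf, ← hm2, ← hn2]; congr 1; ring
  obtain ⟨hl1, hl2⟩ := lam_eq hfro hdet
  have habs1 : |m + n| = m + n := abs_of_nonneg (by linarith)
  have habs2 : |m - n| ≤ m + n := by
    rw [abs_le]; constructor <;> linarith
  have hlam2 : lam2 ξ = m + n := by rw [hl2, habs1]; exact max_eq_left habs2
  have hlam1 : lam1 ξ = |m - n| := by rw [hl1, habs1]; exact min_eq_right habs2
  refine ⟨u₁, u₂, v₁, v₂, m - n, hu, hv, ?_, hlam1.symm, by rw [hlam2]; linarith⟩
  rw [hlam2, Amap, show (m + n + (m - n)) / 2 = m by ring, show (m + n - (m - n)) / 2 = n by ring,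
    hup, huq, hvr, hvs, ← hξ]

/-- the sets `U_n` of the standard construction form an in-approximation of `E`. -/
theorem standard_construction_inApproximation (K : Set (ℝ × ℝ)) (hKc : IsCompact K)
    (hKne : K.Nonempty)
    (hKsub : K ⊆ {p : ℝ × ℝ | 0 < p.1 ∧ p.1 ≤ p.2})
    (E : Set (Matrix (Fin 2) (Fin 2) ℝ)) (hE : E = {ξ | (lam1 ξ, lam2 ξ) ∈ K})
    (ε : ℕ → ℝ) (hεanti : Antitone ε)
    (hεpos : ∀ n, 0 < ε n) (hεlt : ∀ n, ε n < sInf (Prod.fst '' K) / 2)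
    (hε0 : Filter.Tendsto ε Filter.atTop (nhds 0))
    (U : ℕ → Set (Matrix (Fin 2) (Fin 2) ℝ))
    (hU : ∀ n, U n = {ξ | ∃ p ∈ K,
      p.1 - 2 * ε n < lam1 ξ ∧ lam1 ξ < p.1 - ε n ∧
      p.2 - ε n < lam2 ξ ∧ lam2 ξ < p.2 - ε n / 2}) :
    (∀ n, U n ⊆ rcHullOpen (U (n + 1))) ∧
    (∀ r : ℝ, 0 < r → ∃ N : ℕ, ∀ n ≥ N, ∀ ξ ∈ U n, distE ξ E ≤ r) := by
  obtain ⟨q0, hq0K⟩ := hKne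
  constructor
  · intro nn ξ hξmem
    rw [hU nn] at hξmem
    obtain ⟨p, hpK, h1, h2, h3, h4⟩ := hξmem
    obtain ⟨u₁, u₂, v₁, v₂, y₀, hu, hv, hrep, hy₀, hl2nn⟩ := exists_rep ξ
    have hδpos : 0 < ε (nn + 1) := hεpos _
    have hδε : ε (nn + 1) ≤ ε nn := hεanti (Nat.le_succ nn)
    have hp1 : 0 < p.1 := (hKsub hpK).1
    have hp12 : p.1 ≤ p.2 := (hKsub hpK).2
    have hInf : sInf (Prod.fst '' K) ≤ p.1 :=
      csInf_le (hKc.image continuous_fst).bddBelow ⟨p, hpK, rfl⟩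
    have hδp : ε (nn + 1) < p.1 / 2 := lt_of_lt_of_le (hεlt _) (by linarith)
    have hl1nn : 0 ≤ lam1 ξ := hy₀ ▸ abs_nonneg y₀
    set δ := ε (nn + 1) with hδdef
    set L := (max (lam1 ξ) (p.1 - 2 * δ) + (p.1 - δ)) / 2 with hLdef
    set M := (max (lam2 ξ) (p.2 - δ) + (p.2 - δ / 2)) / 2 with hMdef
    have hl1lt : lam1 ξ < p.1 - δ := lt_of_lt_of_le h2 (by linarith)
    have hl2lt : lam2 ξ < p.2 - δ / 2 := lt_of_lt_of_le h4 (by linarith)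
    have hmax1 : max (lam1 ξ) (p.1 - 2 * δ) < p.1 - δ := max_lt hl1lt (by linarith)
    have hmax2 : max (lam2 ξ) (p.2 - δ) < p.2 - δ / 2 := max_lt hl2lt (by linarith)
    have hLlt : L < p.1 - δ := by rw [hLdef]; linarith
    have hLgt : p.1 - 2 * δ < L := by
      have := le_max_right (lam1 ξ) (p.1 - 2 * δ); rw [hLdef]; linarith
    have hLl1 : lam1 ξ < L := by
      have := le_max_left (lam1 ξ) (p.1 - 2 * δ); rw [hLdef]; linarith
    have hMlt : M < p.2 - δ / 2 := by rw [hMdef]; linarith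
    have hMgt : p.2 - δ < M := by
      have := le_max_right (lam2 ξ) (p.2 - δ); rw [hMdef]; linarith
    have hMl2 : lam2 ξ < M := by
      have := le_max_left (lam2 ξ) (p.2 - δ); rw [hMdef]; linarith
    have hLpos : 0 < L := by linarith
    have hMpos : 0 < M := by linarith
    have hLM : L < M := by linarith
    have hcor : ∀ aa bb : ℝ, |aa| = M → |bb| = L →
        lam1 (Amap u₁ u₂ v₁ v₂ aa bb) = L ∧ lam2 (Amap u₁ u₂ v₁ v₂ aa bb) = M := by
      intro aa bb ha hb
      rw [lam1_Amap hu hv, lam2_Amap hu hv, ha, hb]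
      exact ⟨min_eq_right hLM.le, max_eq_left hLM.le⟩
    have haM : |M| = M := abs_of_pos hMpos
    have haM' : |(-M)| = M := by rw [abs_neg]; exact haM
    have haL : |L| = L := abs_of_pos hLpos
    have haL' : |(-L)| = L := by rw [abs_neg]; exact haL
    refine ⟨{Amap u₁ u₂ v₁ v₂ M L, Amap u₁ u₂ v₁ v₂ M (-L),
        Amap u₁ u₂ v₁ v₂ (-M) L, Amap u₁ u₂ v₁ v₂ (-M) (-L)}, ?_, ?_, ?_⟩
    · rw [hU (nn + 1)]
      intro η hη
      simp only [Set.mem_insert_iff, Set.mem_singleton_iff] at hη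
      have hwin : ∀ aa bb : ℝ, |aa| = M → |bb| = L → ∃ p' ∈ K,
          p'.1 - 2 * ε (nn + 1) < lam1 (Amap u₁ u₂ v₁ v₂ aa bb) ∧
          lam1 (Amap u₁ u₂ v₁ v₂ aa bb) < p'.1 - ε (nn + 1) ∧
          p'.2 - ε (nn + 1) < lam2 (Amap u₁ u₂ v₁ v₂ aa bb) ∧
          lam2 (Amap u₁ u₂ v₁ v₂ aa bb) < p'.2 - ε (nn + 1) / 2 := by
        intro aa bb ha hb
        obtain ⟨e1, e2⟩ := hcor aa bb ha hb
        exact ⟨p, hpK, by rw [e1]; exact hLgt, by rw [e1]; exact hLlt,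
          by rw [e2]; exact hMgt, by rw [e2]; exact hMlt⟩
      rcases hη with rfl | rfl | rfl | rfl
      · exact hwin M L haM haL
      · exact hwin M (-L) haM haL'
      · exact hwin (-M) L haM' haL
      · exact hwin (-M) (-L) haM' haL'
    · exact ((((Set.finite_singleton _).insert _).insert _).insert _).isCompact
    · intro f hf hf0
      have hm1 : Amap u₁ u₂ v₁ v₂ M L ∈ ({Amap u₁ u₂ v₁ v₂ M L, Amap u₁ u₂ v₁ v₂ M (-L),
          Amap u₁ u₂ v₁ v₂ (-M) L, Amap u₁ u₂ v₁ v₂ (-M) (-L)} :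
          Set (Matrix (Fin 2) (Fin 2) ℝ)) := Set.mem_insert _ _
      have hm2 : Amap u₁ u₂ v₁ v₂ M (-L) ∈ ({Amap u₁ u₂ v₁ v₂ M L, Amap u₁ u₂ v₁ v₂ M (-L),
          Amap u₁ u₂ v₁ v₂ (-M) L, Amap u₁ u₂ v₁ v₂ (-M) (-L)} :
          Set (Matrix (Fin 2) (Fin 2) ℝ)) :=
        Set.mem_insert_iff.2 (Or.inr (Set.mem_insert _ _))
      have hm3 : Amap u₁ u₂ v₁ v₂ (-M) L ∈ ({Amap u₁ u₂ v₁ v₂ M L, Amap u₁ u₂ v₁ v₂ M (-L),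
          Amap u₁ u₂ v₁ v₂ (-M) L, Amap u₁ u₂ v₁ v₂ (-M) (-L)} :
          Set (Matrix (Fin 2) (Fin 2) ℝ)) :=
        Set.mem_insert_iff.2 (Or.inr (Set.mem_insert_iff.2 (Or.inr (Set.mem_insert _ _))))
      have hm4 : Amap u₁ u₂ v₁ v₂ (-M) (-L) ∈ ({Amap u₁ u₂ v₁ v₂ M L, Amap u₁ u₂ v₁ v₂ M (-L),
          Amap u₁ u₂ v₁ v₂ (-M) L, Amap u₁ u₂ v₁ v₂ (-M) (-L)} :
          Set (Matrix (Fin 2) (Fin 2) ℝ)) :=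
        Set.mem_insert_iff.2 (Or.inr (Set.mem_insert_iff.2 (Or.inr
          (Set.mem_insert_iff.2 (Or.inr rfl)))))
      have hyL : -L < y₀ ∧ y₀ < L := by
        constructor
        · have := neg_abs_le y₀; rw [hy₀] at this; linarith
        · have := le_abs_self y₀; rw [hy₀] at this; linarith
      set t2 := (y₀ + L) / (2 * L) with ht2def
      have hL0 : (2 : ℝ) * L ≠ 0 := by positivity
      have ht2 : t2 ∈ Set.Icc (0 : ℝ) 1 :=
        ⟨div_nonneg (by linarith [hyL.1]) (by linarith),
         (div_le_one (by linarith)).2 (by linarith [hyL.2])⟩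
      have ht2e : t2 * (2 * L) = y₀ + L := div_mul_cancel₀ _ hL0
      have hrank2 : ∀ aa : ℝ, (Amap u₁ u₂ v₁ v₂ aa L - Amap u₁ u₂ v₁ v₂ aa (-L)).rank = 1 := by
        intro aa
        rw [Amap_sub]
        refine rank_one_of_det_zero (Amap_ne_zero hu hv (Or.inr (by intro h; apply hL0; linarith
          [h]))) ?_
        rw [det_Amap hu hv]; ring
      have hmid : ∀ aa : ℝ, f (Amap u₁ u₂ v₁ v₂ aa y₀) ≤
          t2 * f (Amap u₁ u₂ v₁ v₂ aa L) + (1 - t2) * f (Amap u₁ u₂ v₁ v₂ aa (-L)) := by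
        intro aa
        have := hf (Amap u₁ u₂ v₁ v₂ aa L) (Amap u₁ u₂ v₁ v₂ aa (-L)) t2 ht2 (hrank2 aa)
        rw [Amap_combo, show t2 * aa + (1 - t2) * aa = aa by ring,
          show t2 * L + (1 - t2) * (-L) = y₀ by linear_combination ht2e] at this
        exact this
      have hfM : f (Amap u₁ u₂ v₁ v₂ M y₀) ≤ 0 := by
        have h0a := hf0 _ hm1
        have h0b := hf0 _ hm2
        have hmm := hmid M
        have p1 : t2 * f (Amap u₁ u₂ v₁ v₂ M L) ≤ t2 * 0 :=
          mul_le_mul_of_nonneg_left h0a ht2.1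
        have p2 : (1 - t2) * f (Amap u₁ u₂ v₁ v₂ M (-L)) ≤ (1 - t2) * 0 :=
          mul_le_mul_of_nonneg_left h0b (by linarith [ht2.2])
        rw [mul_zero] at p1 p2
        linarith
      have hfM' : f (Amap u₁ u₂ v₁ v₂ (-M) y₀) ≤ 0 := by
        have h0a := hf0 _ hm3
        have h0b := hf0 _ hm4
        have hmm := hmid (-M)
        have p1 : t2 * f (Amap u₁ u₂ v₁ v₂ (-M) L) ≤ t2 * 0 :=
          mul_le_mul_of_nonneg_left h0a ht2.1
        have p2 : (1 - t2) * f (Amap u₁ u₂ v₁ v₂ (-M) (-L)) ≤ (1 - t2) * 0 :=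
          mul_le_mul_of_nonneg_left h0b (by linarith [ht2.2])
        rw [mul_zero] at p1 p2
        linarith
      set t1 := (lam2 ξ + M) / (2 * M) with ht1def
      have hM0 : (2 : ℝ) * M ≠ 0 := by positivity
      have ht1 : t1 ∈ Set.Icc (0 : ℝ) 1 :=
        ⟨div_nonneg (by linarith) (by linarith),
         (div_le_one (by linarith)).2 (by linarith)⟩
      have ht1e : t1 * (2 * M) = lam2 ξ + M := div_mul_cancel₀ _ hM0
      have hrank1 : (Amap u₁ u₂ v₁ v₂ M y₀ - Amap u₁ u₂ v₁ v₂ (-M) y₀).rank = 1 := by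
        rw [Amap_sub]
        refine rank_one_of_det_zero (Amap_ne_zero hu hv (Or.inl (by intro h; apply hM0; linarith
          [h]))) ?_
        rw [det_Amap hu hv]; ring
      have hfin := hf (Amap u₁ u₂ v₁ v₂ M y₀) (Amap u₁ u₂ v₁ v₂ (-M) y₀) t1 ht1 hrank1
      rw [Amap_combo, show t1 * M + (1 - t1) * (-M) = lam2 ξ by linear_combination ht1e,
        show t1 * y₀ + (1 - t1) * y₀ = y₀ by ring, ← hrep] at hfin
      have p1 : t1 * f (Amap u₁ u₂ v₁ v₂ M y₀) ≤ t1 * 0 :=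
        mul_le_mul_of_nonneg_left hfM ht1.1
      have p2 : (1 - t1) * f (Amap u₁ u₂ v₁ v₂ (-M) y₀) ≤ (1 - t1) * 0 :=
        mul_le_mul_of_nonneg_left hfM' (by linarith [ht1.2])
      rw [mul_zero] at p1 p2
      linarith
  · intro r hr
    obtain ⟨N, hN⟩ := Metric.tendsto_atTop.1 hε0 (r / 3) (by linarith)
    refine ⟨N, fun n hn ξ hξmem => ?_⟩
    rw [hU n] at hξmem
    obtain ⟨p, hpK, h1, h2, h3, h4⟩ := hξmem
    obtain ⟨u₁, u₂, v₁, v₂, y₀, hu, hv, hrep, hy₀, hl2nn⟩ := exists_rep ξ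
    have hεr : ε n < r / 3 := by
      have := hN n hn
      rw [Real.dist_eq, sub_zero, abs_of_pos (hεpos n)] at this
      exact this
    have hεn : 0 < ε n := hεpos n
    have hp1 : 0 < p.1 := (hKsub hpK).1
    have hp12 : p.1 ≤ p.2 := (hKsub hpK).2
    set y₁ := if 0 ≤ y₀ then p.1 else -p.1 with hy₁def
    have hay₁ : |y₁| = p.1 := by
      rw [hy₁def]; split
      · exact abs_of_pos hp1
      · rw [abs_neg]; exact abs_of_pos hp1
    have hap2 : |p.2| = p.2 := abs_of_pos (lt_of_lt_of_le hp1 hp12)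
    have hηE : Amap u₁ u₂ v₁ v₂ p.2 y₁ ∈ E := by
      rw [hE]
      show (lam1 _, lam2 _) ∈ K
      rw [lam1_Amap hu hv, lam2_Amap hu hv, hay₁, hap2, min_eq_right hp12, max_eq_left hp12]
      exact hpK
    have hyd : (y₀ - y₁) ^ 2 ≤ (2 * ε n) ^ 2 := by
      rw [hy₁def]
      split
      · rename_i hge
        have hye : y₀ = lam1 ξ := by rw [← hy₀, abs_of_nonneg hge]
        exact sq_le_sq' (by linarith) (by linarith)
      · rename_i hlt
        push_neg at hlt
        have hye : y₀ = -lam1 ξ := by rw [← hy₀, abs_of_neg hlt]; ring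
        exact sq_le_sq' (by linarith) (by linarith)
      
    have hxd : (lam2 ξ - p.2) ^ 2 ≤ (ε n) ^ 2 :=
      sq_le_sq' (by linarith) (by linarith)
    have hfro : frobNorm (ξ - Amap u₁ u₂ v₁ v₂ p.2 y₁) ≤ r := by
      rw [frobNorm, hrep, Amap_sub, frobSq_Amap hu hv]
      have hb : (lam2 ξ - p.2) ^ 2 + (y₀ - y₁) ^ 2 ≤ r ^ 2 := by
        have e1 : (2 * ε n) ^ 2 = 4 * (ε n) ^ 2 := by ring
        have e2 : (ε n) ^ 2 ≤ (r / 3) ^ 2 := sq_le_sq' (by linarith) (by linarith)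
        have e3 : (r / 3) ^ 2 = r ^ 2 / 9 := by ring
        have e4 : 0 ≤ r ^ 2 := sq_nonneg r
        linarith
      calc Real.sqrt ((lam2 ξ - p.2) ^ 2 + (y₀ - y₁) ^ 2) ≤ Real.sqrt (r ^ 2) :=
            Real.sqrt_le_sqrt hb
        _ = r := Real.sqrt_sq hr.le
    rw [distE]
    refine le_trans (csInf_le ⟨0, ?_⟩ ⟨Amap u₁ u₂ v₁ v₂ p.2 y₁, hηE, rfl⟩) hfro
    rintro x ⟨η', -, rfl⟩
    exact Real.sqrt_nonneg _
end

section
/- Let K ⊂ {(x,y) ∈ ℝ² : 0 < x ≤ y} be compact, let 0 < ε_{n+1} < ε_n < a₀/2 where a₀ = min_{(a,b)∈K} a, and for (a,b) ∈ K set V^n_{(a,b)} := {ξ ∈ ℝ^{2×2} : a − 2ε_n < λ₁(ξ) < a − ε_n, b − ε_n < λ₂(ξ) < b − ε_n/2}. Then V^n_{(a,b)} ⊆ (V^{n+1}_{(a,b)})^{rc}. -/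
open scoped BigOperators

section Aux

open Matrix

lemma rank_one_of_det (A : Matrix (Fin 2) (Fin 2) ℝ) (hdet : A.det = 0) (hA : A ≠ 0) :
    A.rank = 1 := by
  have hd : A 0 0 * A 1 1 - A 0 1 * A 1 0 = 0 := by
    rw [← Matrix.det_fin_two A]; exact hdet
  obtain ⟨v, hv0, hsub⟩ : ∃ v : Fin 2 → ℝ, v ≠ 0 ∧
      Set.range Aᵀ ⊆ (Submodule.span ℝ {v} : Submodule ℝ (Fin 2 → ℝ)) := by
    by_cases hc0 : Aᵀ 0 = 0
    · refine ⟨Aᵀ 1, ?_, ?_⟩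
      · intro h
        apply hA
        ext i j
        fin_cases j
        · simpa using congrFun hc0 i
        · simpa using congrFun h i
      · rintro x ⟨j, rfl⟩
        fin_cases j
        · simp [hc0]
        · exact Submodule.mem_span_singleton_self _
    · have h00 : A 0 0 ≠ 0 ∨ A 1 0 ≠ 0 := by
        by_contra h
        push_neg at h
        apply hc0
        funext i
        fin_cases i <;> simp [Matrix.transpose_apply, h.1, h.2]
      refine ⟨Aᵀ 0, hc0, ?_⟩
      rintro x ⟨j, rfl⟩
      fin_cases j
      · exact Submodule.mem_span_singleton_self _
      · rcases h00 with h0 | h0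
        · refine Submodule.mem_span_singleton.mpr ⟨A 0 1 / A 0 0, ?_⟩
          funext i
          fin_cases i <;> simp [Matrix.transpose_apply]
          · field_simp
          · field_simp
            nlinarith [hd]
        · refine Submodule.mem_span_singleton.mpr ⟨A 1 1 / A 1 0, ?_⟩
          funext i
          fin_cases i <;> simp [Matrix.transpose_apply]
          · by_cases h00' : A 0 0 = 0
            · rw [h00']
              have : A 0 1 * A 1 0 = 0 := by linear_combination A 1 1 * h00' - hd
              rcases mul_eq_zero.mp this with h | h
              · rw [h]; ring
              · exact absurd h h0
            · field_simp
              nlinarith [hd]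
          · field_simp
  have hle : A.rank ≤ 1 := by
    rw [Matrix.rank_eq_finrank_span_cols]
    have h1 : Submodule.span ℝ (Set.range Aᵀ) ≤ Submodule.span ℝ {v} :=
      Submodule.span_le.mpr hsub
    calc Module.finrank ℝ (Submodule.span ℝ (Set.range Aᵀ))
        ≤ Module.finrank ℝ (Submodule.span ℝ {v}) := Submodule.finrank_mono h1
      _ = 1 := finrank_span_singleton hv0
  have hge : A.rank ≠ 0 := by
    intro h0
    rw [Matrix.rank_eq_finrank_span_cols] at h0
    rw [Submodule.finrank_eq_zero] at h0
    rw [Submodule.span_eq_bot] at h0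
    apply hA
    ext i j
    simpa using congrFun (h0 (Aᵀ j) ⟨j, rfl⟩) i
  omega

noncomputable def Pm (u1 u2 v1 v2 x y : ℝ) : Matrix (Fin 2) (Fin 2) ℝ :=
  !![x*u1 + y*v1, -(x*u2) + y*v2; x*u2 + y*v2, x*u1 - y*v1]

lemma det_Pm (u1 u2 v1 v2 x y : ℝ) (hu : u1^2+u2^2 = 1) (hv : v1^2+v2^2 = 1) :
    (Pm u1 u2 v1 v2 x y).det = x^2 - y^2 := by
  rw [Pm, Matrix.det_fin_two_of]
  linear_combination x^2 * hu - y^2 * hv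

lemma sub_Pm (u1 u2 v1 v2 x1 y1 x2 y2 : ℝ) :
    Pm u1 u2 v1 v2 x1 y1 - Pm u1 u2 v1 v2 x2 y2 = Pm u1 u2 v1 v2 (x1-x2) (y1-y2) := by
  ext i j
  fin_cases i <;> fin_cases j <;> simp [Pm] <;> ring

lemma comb_Pm (u1 u2 v1 v2 x1 y1 x2 y2 t X Y : ℝ)
    (hX : t*x1+(1-t)*x2 = X) (hY : t*y1+(1-t)*y2 = Y) :
    t • Pm u1 u2 v1 v2 x1 y1 + (1-t) • Pm u1 u2 v1 v2 x2 y2 = Pm u1 u2 v1 v2 X Y := by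
  subst hX hY
  ext i j
  fin_cases i <;> fin_cases j <;> simp [Pm] <;> ring

lemma Pm_ne_zero (u1 u2 v1 v2 x y : ℝ) (hu : u1^2+u2^2 = 1) (hv : v1^2+v2^2 = 1)
    (hx : x ≠ 0) : Pm u1 u2 v1 v2 x y ≠ 0 := by
  intro h
  have e1 : x*u1 + y*v1 = 0 := by simpa [Pm] using congrFun (congrFun h 0) 0
  have e2 : -(x*u2) + y*v2 = 0 := by simpa [Pm] using congrFun (congrFun h 0) 1
  have e3 : x*u2 + y*v2 = 0 := by simpa [Pm] using congrFun (congrFun h 1) 0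
  have e4 : x*u1 - y*v1 = 0 := by simpa [Pm] using congrFun (congrFun h 1) 1
  have key : 2*x^2 + 2*y^2 = 0 := by nlinarith [e1, e2, e3, e4, hu, hv]
  have : x = 0 := by nlinarith [key]
  exact hx this

lemma rank_Pm (u1 u2 v1 v2 x y : ℝ) (hu : u1^2+u2^2 = 1) (hv : v1^2+v2^2 = 1)
    (hxy : x^2 = y^2) (hx : x ≠ 0) : (Pm u1 u2 v1 v2 x y).rank = 1 :=
  rank_one_of_det _ (by rw [det_Pm _ _ _ _ _ _ hu hv, hxy]; ring)
    (Pm_ne_zero _ _ _ _ _ _ hu hv hx)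

lemma split_Pm (u1 u2 v1 v2 : ℝ) (hu : u1^2+u2^2 = 1) (hv : v1^2+v2^2 = 1)
    (f : Matrix (Fin 2) (Fin 2) ℝ → ℝ) (hf : RankOneConvex f)
    (x1 y1 x2 y2 t X Y : ℝ) (ht : t ∈ Set.Icc (0:ℝ) 1)
    (habs : (x1-x2)^2 = (y1-y2)^2) (hne : x1 ≠ x2)
    (hX : t*x1+(1-t)*x2 = X) (hY : t*y1+(1-t)*y2 = Y) :
    f (Pm u1 u2 v1 v2 X Y) ≤
      t * f (Pm u1 u2 v1 v2 x1 y1) + (1-t) * f (Pm u1 u2 v1 v2 x2 y2) := by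
  have hr : (Pm u1 u2 v1 v2 x1 y1 - Pm u1 u2 v1 v2 x2 y2).rank = 1 := by
    rw [sub_Pm]
    exact rank_Pm _ _ _ _ _ _ hu hv habs (sub_ne_zero.mpr hne)
  have := hf (Pm u1 u2 v1 v2 x1 y1) (Pm u1 u2 v1 v2 x2 y2) t ht hr
  rwa [comb_Pm _ _ _ _ _ _ _ _ _ _ _ hX hY] at this

lemma frobSq_Pm (u1 u2 v1 v2 x y : ℝ) (hu : u1^2+u2^2 = 1) (hv : v1^2+v2^2 = 1) :
    frobSq (Pm u1 u2 v1 v2 x y) = 2*(x^2 + y^2) := by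
  simp [frobSq, Pm, Fin.sum_univ_two]
  nlinarith [hu, hv]

lemma lam_eq_s13 (ξ : Matrix (Fin 2) (Fin 2) ℝ) (R S : ℝ) (hR : 0 ≤ R) (hS : 0 ≤ S)
    (hF : frobSq ξ = 2*(R^2+S^2)) (hD : ξ.det = R^2 - S^2) :
    lam1 ξ = |R - S| ∧ lam2 ξ = R + S := by
  rcases le_total S R with h | h
  · have habs : |ξ.det| = R^2 - S^2 := by rw [hD]; exact abs_of_nonneg (by nlinarith)
    have h1 : frobSq ξ + 2*|ξ.det| = (2*R)^2 := by rw [hF, habs]; ring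
    have h2 : frobSq ξ - 2*|ξ.det| = (2*S)^2 := by rw [hF, habs]; ring
    rw [lam1, lam2, h1, h2, Real.sqrt_sq (by linarith), Real.sqrt_sq (by linarith),
      abs_of_nonneg (by linarith : (0:ℝ) ≤ R - S)]
    constructor <;> ring
  · have habs : |ξ.det| = S^2 - R^2 := by
      rw [hD, abs_of_nonpos (by nlinarith : R^2 - S^2 ≤ 0)]; ring
    have h1 : frobSq ξ + 2*|ξ.det| = (2*S)^2 := by rw [hF, habs]; ring
    have h2 : frobSq ξ - 2*|ξ.det| = (2*R)^2 := by rw [hF, habs]; ring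
    rw [lam1, lam2, h1, h2, Real.sqrt_sq (by linarith), Real.sqrt_sq (by linarith),
      abs_of_nonpos (by linarith : R - S ≤ 0)]
    constructor <;> ring

lemma lam_Pm (u1 u2 v1 v2 x y : ℝ) (hu : u1^2+u2^2 = 1) (hv : v1^2+v2^2 = 1) :
    lam1 (Pm u1 u2 v1 v2 x y) = |(|x| - |y|)| ∧ lam2 (Pm u1 u2 v1 v2 x y) = |x| + |y| :=
  lam_eq_s13 _ |x| |y| (abs_nonneg _) (abs_nonneg _)
    (by rw [frobSq_Pm _ _ _ _ _ _ hu hv, sq_abs, sq_abs])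
    (by rw [det_Pm _ _ _ _ _ _ hu hv, sq_abs, sq_abs])

lemma center_mem (u1 u2 v1 v2 : ℝ) (hu : u1^2+u2^2 = 1) (hv : v1^2+v2^2 = 1)
    (R S μ₁ μ₂ : ℝ) (hRS0 : 0 ≤ R + S) (hμ₁ : 0 < μ₁) (hμ₁₂ : μ₁ < μ₂)
    (habs1 : |R - S| ≤ μ₁) (hsum : R + S ≤ μ₂)
    (f : Matrix (Fin 2) (Fin 2) ℝ → ℝ) (hf : RankOneConvex f)
    (e1 : f (Pm u1 u2 v1 v2 ((μ₂+μ₁)/2) ((μ₂-μ₁)/2)) ≤ 0)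
    (e2 : f (Pm u1 u2 v1 v2 ((μ₂-μ₁)/2) ((μ₂+μ₁)/2)) ≤ 0)
    (e3 : f (Pm u1 u2 v1 v2 (-((μ₂+μ₁)/2)) (-((μ₂-μ₁)/2))) ≤ 0)
    (e4 : f (Pm u1 u2 v1 v2 (-((μ₂-μ₁)/2)) (-((μ₂+μ₁)/2))) ≤ 0) :
    f (Pm u1 u2 v1 v2 R S) ≤ 0 := by
  have habs := abs_le.mp habs1
  have hμ₂0 : 0 < μ₂ := lt_trans hμ₁ hμ₁₂
  have hθ₀m : (μ₂ - (R+S))/(2*μ₂) ∈ Set.Icc (0:ℝ) 1 :=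
    ⟨div_nonneg (by linarith) (by linarith), by
      rw [div_le_one (by linarith)]; linarith⟩
  have hθ₁m : (μ₁ - (R-S))/(2*μ₁) ∈ Set.Icc (0:ℝ) 1 :=
    ⟨div_nonneg (by linarith [habs.2]) (by linarith), by
      rw [div_le_one (by linarith)]; linarith [habs.1]⟩
  have hθ₂m : (μ₁ + (R-S))/(2*μ₁) ∈ Set.Icc (0:ℝ) 1 :=
    ⟨div_nonneg (by linarith [habs.1]) (by linarith), by
      rw [div_le_one (by linarith)]; linarith [habs.2]⟩
  have step1 : f (Pm u1 u2 v1 v2 R S) ≤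
      ((μ₂ - (R+S))/(2*μ₂)) * f (Pm u1 u2 v1 v2 (-((μ₂-R+S)/2)) (-((μ₂+R-S)/2))) +
      (1 - (μ₂ - (R+S))/(2*μ₂)) * f (Pm u1 u2 v1 v2 ((μ₂+R-S)/2) ((μ₂-R+S)/2)) := by
    apply split_Pm u1 u2 v1 v2 hu hv f hf _ _ _ _ _ _ _ hθ₀m (by ring)
    · intro h; linarith [h]
    · field_simp; ring
    · field_simp; ring
  have step2 : f (Pm u1 u2 v1 v2 ((μ₂+R-S)/2) ((μ₂-R+S)/2)) ≤
      ((μ₁ - (R-S))/(2*μ₁)) * f (Pm u1 u2 v1 v2 ((μ₂-μ₁)/2) ((μ₂+μ₁)/2)) +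
      (1 - (μ₁ - (R-S))/(2*μ₁)) * f (Pm u1 u2 v1 v2 ((μ₂+μ₁)/2) ((μ₂-μ₁)/2)) := by
    apply split_Pm u1 u2 v1 v2 hu hv f hf _ _ _ _ _ _ _ hθ₁m (by ring)
    · intro h; linarith [h]
    · field_simp; ring
    · field_simp; ring
  have step3 : f (Pm u1 u2 v1 v2 (-((μ₂-R+S)/2)) (-((μ₂+R-S)/2))) ≤
      ((μ₁ + (R-S))/(2*μ₁)) * f (Pm u1 u2 v1 v2 (-((μ₂-μ₁)/2)) (-((μ₂+μ₁)/2))) +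
      (1 - (μ₁ + (R-S))/(2*μ₁)) * f (Pm u1 u2 v1 v2 (-((μ₂+μ₁)/2)) (-((μ₂-μ₁)/2))) := by
    apply split_Pm u1 u2 v1 v2 hu hv f hf _ _ _ _ _ _ _ hθ₂m (by ring)
    · intro h; linarith [h]
    · field_simp; ring
    · field_simp; ring
  have hCp : f (Pm u1 u2 v1 v2 ((μ₂+R-S)/2) ((μ₂-R+S)/2)) ≤ 0 := by
    refine le_trans step2 ?_
    have t1 := mul_nonpos_of_nonneg_of_nonpos hθ₁m.1 e2
    have t2 := mul_nonpos_of_nonneg_of_nonpos (by linarith [hθ₁m.2] : (0:ℝ) ≤ 1 - (μ₁ - (R-S))/(2*μ₁)) e1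
    linarith
  have hCm : f (Pm u1 u2 v1 v2 (-((μ₂-R+S)/2)) (-((μ₂+R-S)/2))) ≤ 0 := by
    refine le_trans step3 ?_
    have t1 := mul_nonpos_of_nonneg_of_nonpos hθ₂m.1 e4
    have t2 := mul_nonpos_of_nonneg_of_nonpos (by linarith [hθ₂m.2] : (0:ℝ) ≤ 1 - (μ₁ + (R-S))/(2*μ₁)) e3
    linarith
  refine le_trans step1 ?_
  have t1 := mul_nonpos_of_nonneg_of_nonpos hθ₀m.1 hCm
  have t2 := mul_nonpos_of_nonneg_of_nonpos (by linarith [hθ₀m.2] : (0:ℝ) ≤ 1 - (μ₂ - (R+S))/(2*μ₂)) hCp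
  linarith

end Aux

set_option maxHeartbeats 2000000 in
/-- the inclusion `V^n_{(a,b)} ⊆ (V^{n+1}_{(a,b)})^{rc}`. -/
theorem V_subset_rcHullOpen_V (K : Set (ℝ × ℝ)) (hKc : IsCompact K)
    (hKsub : K ⊆ {p : ℝ × ℝ | 0 < p.1 ∧ p.1 ≤ p.2})
    (a b : ℝ) (hab : (a, b) ∈ K)
    (ε₁ ε₂ : ℝ) (hε₂ : 0 < ε₂) (hε₂₁ : ε₂ < ε₁) (hε₁ : ε₁ < sInf (Prod.fst '' K) / 2)
    (V : ℝ → Set (Matrix (Fin 2) (Fin 2) ℝ))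
    (hV : ∀ e, V e = {ξ | a - 2 * e < lam1 ξ ∧ lam1 ξ < a - e ∧
      b - e < lam2 ξ ∧ lam2 ξ < b - e / 2}) :
    V ε₁ ⊆ rcHullOpen (V ε₂) := by
  intro ξ hξ
  rw [hV ε₁] at hξ
  obtain ⟨h1, h2, h3, h4⟩ := hξ
  obtain ⟨ha_pos, hab'⟩ := hKsub hab
  simp only at ha_pos hab'
  have hsinf : sInf (Prod.fst '' K) ≤ a :=
    csInf_le ((hKc.image continuous_fst).bddBelow) ⟨(a,b), hab, rfl⟩
  have ha2 : 2*ε₁ < a := by linarith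
  set z1 := (ξ 0 0 + ξ 1 1)/2 with hz1
  set z2 := (ξ 1 0 - ξ 0 1)/2 with hz2
  set w1 := (ξ 0 0 - ξ 1 1)/2 with hw1
  set w2 := (ξ 1 0 + ξ 0 1)/2 with hw2
  set R := Real.sqrt (z1^2 + z2^2) with hRdef
  set S := Real.sqrt (w1^2 + w2^2) with hSdef
  have hR0 : 0 ≤ R := Real.sqrt_nonneg _
  have hS0 : 0 ≤ S := Real.sqrt_nonneg _
  have hR2 : R^2 = z1^2 + z2^2 := Real.sq_sqrt (by positivity)
  have hS2 : S^2 = w1^2 + w2^2 := Real.sq_sqrt (by positivity)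
  have hF : frobSq ξ = 2*(R^2 + S^2) := by
    rw [hR2, hS2, hz1, hz2, hw1, hw2]
    simp [frobSq, Fin.sum_univ_two]
    ring
  have hD : ξ.det = R^2 - S^2 := by
    rw [hR2, hS2, hz1, hz2, hw1, hw2, Matrix.det_fin_two]
    ring
  obtain ⟨hl1, hl2⟩ := lam_eq_s13 ξ R S hR0 hS0 hF hD
  rw [hl1] at h1 h2
  rw [hl2] at h3 h4
  have hlt : |R - S| < R + S := by
    calc |R - S| < a - ε₁ := h2
      _ ≤ b - ε₁ := by linarith
      _ < R + S := h3
  have hRS := abs_lt.mp hlt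
  have hRpos : 0 < R := by cases abs_cases (R - S) <;> linarith [hRS.1, hRS.2]
  have hSpos : 0 < S := by cases abs_cases (R - S) <;> linarith [hRS.1, hRS.2]
  have hRne : R ≠ 0 := ne_of_gt hRpos
  have hSne : S ≠ 0 := ne_of_gt hSpos
  obtain ⟨u1, u2, v1, v2, hu, hv, hξeq⟩ : ∃ u1 u2 v1 v2 : ℝ,
      u1^2+u2^2 = 1 ∧ v1^2+v2^2 = 1 ∧ ξ = Pm u1 u2 v1 v2 R S := by
    refine ⟨z1/R, z2/R, w1/S, w2/S, ?_, ?_, ?_⟩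
    · field_simp
      linarith [hR2]
    · field_simp
      linarith [hS2]
    · ext i j
      fin_cases i <;> fin_cases j <;>
        simp [Pm, hz1, hz2, hw1, hw2] <;> field_simp <;> ring
  -- choose target singular values
  set μ₁ := (max |R - S| (a - 2*ε₂) + (a - ε₂))/2 with hμ₁def
  set μ₂ := (max (R + S) (b - ε₂) + (b - ε₂/2))/2 with hμ₂def
  have hL1a : |R - S| < a - ε₂ := by linarith
  have hmax1 : max |R - S| (a - 2*ε₂) < a - ε₂ := max_lt hL1a (by linarith)
  have hμ₁gt : a - 2*ε₂ < μ₁ := by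
    have := le_max_right |R - S| (a - 2*ε₂); rw [hμ₁def]; linarith
  have hμ₁lt : μ₁ < a - ε₂ := by rw [hμ₁def]; linarith
  have hμ₁ge : |R - S| ≤ μ₁ := by
    have := le_max_left |R - S| (a - 2*ε₂); rw [hμ₁def]; linarith
  have hμ₁pos : 0 < μ₁ := by linarith
  have hL2a : R + S < b - ε₂/2 := by linarith
  have hmax2 : max (R + S) (b - ε₂) < b - ε₂/2 := max_lt hL2a (by linarith)
  have hμ₂gt : b - ε₂ < μ₂ := by
    have := le_max_right (R + S) (b - ε₂); rw [hμ₂def]; linarith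
  have hμ₂lt : μ₂ < b - ε₂/2 := by rw [hμ₂def]; linarith
  have hμ₂ge : R + S ≤ μ₂ := by
    have := le_max_left (R + S) (b - ε₂); rw [hμ₂def]; linarith
  have hμ₁₂ : μ₁ < μ₂ := by linarith
  -- the four target matrices
  set P1 := Pm u1 u2 v1 v2 ((μ₂+μ₁)/2) ((μ₂-μ₁)/2) with hP1
  set P2 := Pm u1 u2 v1 v2 ((μ₂-μ₁)/2) ((μ₂+μ₁)/2) with hP2
  set P3 := Pm u1 u2 v1 v2 (-((μ₂+μ₁)/2)) (-((μ₂-μ₁)/2)) with hP3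
  set P4 := Pm u1 u2 v1 v2 (-((μ₂-μ₁)/2)) (-((μ₂+μ₁)/2)) with hP4
  have hq0 : (0:ℝ) < (μ₂-μ₁)/2 := by linarith
  have hp0 : (0:ℝ) < (μ₂+μ₁)/2 := by linarith
  have habs_pq : |(|(μ₂+μ₁)/2| - |(μ₂-μ₁)/2|)| = μ₁ := by
    rw [abs_of_pos hp0, abs_of_pos hq0, abs_of_nonneg (by linarith : (0:ℝ) ≤ (μ₂+μ₁)/2 - (μ₂-μ₁)/2)]
    ring
  have habs_qp : |(|(μ₂-μ₁)/2| - |(μ₂+μ₁)/2|)| = μ₁ := by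
    rw [abs_of_pos hp0, abs_of_pos hq0, abs_of_nonpos (by linarith : (μ₂-μ₁)/2 - (μ₂+μ₁)/2 ≤ 0)]
    ring
  have hsum_pq : |(μ₂+μ₁)/2| + |(μ₂-μ₁)/2| = μ₂ := by
    rw [abs_of_pos hp0, abs_of_pos hq0]; ring
  have hsum_qp : |(μ₂-μ₁)/2| + |(μ₂+μ₁)/2| = μ₂ := by
    rw [abs_of_pos hp0, abs_of_pos hq0]; ring
  have hmemV : ∀ P ∈ ({P1, P2, P3, P4} : Set (Matrix (Fin 2) (Fin 2) ℝ)), P ∈ V ε₂ := by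
    intro P hP
    rw [hV ε₂]
    simp only [Set.mem_insert_iff, Set.mem_singleton_iff] at hP
    have hbounds : lam1 P = μ₁ ∧ lam2 P = μ₂ := by
      rcases hP with rfl | rfl | rfl | rfl
      · obtain ⟨l1, l2⟩ := lam_Pm u1 u2 v1 v2 ((μ₂+μ₁)/2) ((μ₂-μ₁)/2) hu hv
        rw [hP1, l1, l2, habs_pq, hsum_pq]
        exact ⟨rfl, rfl⟩
      · obtain ⟨l1, l2⟩ := lam_Pm u1 u2 v1 v2 ((μ₂-μ₁)/2) ((μ₂+μ₁)/2) hu hv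
        rw [hP2, l1, l2, habs_qp, hsum_qp]
        exact ⟨rfl, rfl⟩
      · obtain ⟨l1, l2⟩ := lam_Pm u1 u2 v1 v2 (-((μ₂+μ₁)/2)) (-((μ₂-μ₁)/2)) hu hv
        rw [hP3, l1, l2, abs_neg, abs_neg, habs_pq, hsum_pq]
        exact ⟨rfl, rfl⟩
      · obtain ⟨l1, l2⟩ := lam_Pm u1 u2 v1 v2 (-((μ₂-μ₁)/2)) (-((μ₂+μ₁)/2)) hu hv
        rw [hP4, l1, l2, abs_neg, abs_neg, habs_qp, hsum_qp]
        exact ⟨rfl, rfl⟩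
    rw [Set.mem_setOf_eq, hbounds.1, hbounds.2]
    refine ⟨by linarith, by linarith, by linarith, by linarith⟩
  refine ⟨{P1, P2, P3, P4}, hmemV, ?_, ?_⟩
  · exact Set.Finite.isCompact (Set.toFinite _)
  · intro f hf hfE
    rw [hξeq]
    exact center_mem u1 u2 v1 v2 hu hv R S μ₁ μ₂ (by linarith) hμ₁pos hμ₁₂ hμ₁ge hμ₂ge f hf
      (hfE P1 (by simp)) (hfE P2 (by simp)) (hfE P3 (by simp)) (hfE P4 (by simp))
end

section
/- Let K ⊂ {(x,y) ∈ ℝ² : 0 < x ≤ y} be compact, let E := {ξ ∈ ℝ^{2×2} : (λ₁(ξ), λ₂(ξ)) ∈ K}, let 0 < ε_n < a₀/2 where a₀ = min_{(a,b)∈K} a, and let U_n := {ξ ∈ ℝ^{2×2} : ∃(a,b) ∈ K, a − 2ε_n < λ₁(ξ) < a − ε_n and b − ε_n < λ₂(ξ) < b − ε_n/2}. Then for every ξ ∈ U_n one has dist(ξ, E) ≤ 3√2 · ε_n, where dist is with respect to the Frobenius norm. -/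
open scoped BigOperators

/-- A 2×2 matrix built from a conformal part `(x,y)` and anticonformal part `(u,v)`. -/
def mkCA (x y u v : ℝ) : Matrix (Fin 2) (Fin 2) ℝ := !![x+u, y+v; v-y, x-u]

lemma frobSq_mkCA (x y u v : ℝ) :
    frobSq (mkCA x y u v) = 2*(x^2+y^2) + 2*(u^2+v^2) := by
  simp [frobSq, mkCA, Fin.sum_univ_two]; ring

lemma det_mkCA (x y u v : ℝ) : (mkCA x y u v).det = (x^2+y^2) - (u^2+v^2) := by
  simp [mkCA, Matrix.det_fin_two_of]; ring

lemma exists_mkCA (ξ : Matrix (Fin 2) (Fin 2) ℝ) : ∃ x y u v, ξ = mkCA x y u v := by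
  refine ⟨(ξ 0 0 + ξ 1 1)/2, (ξ 0 1 - ξ 1 0)/2, (ξ 0 0 - ξ 1 1)/2, (ξ 0 1 + ξ 1 0)/2, ?_⟩
  ext i j; fin_cases i <;> fin_cases j <;> simp [mkCA] <;> ring

lemma sub_mkCA (x y u v x' y' u' v' : ℝ) :
    mkCA x y u v - mkCA x' y' u' v' = mkCA (x-x') (y-y') (u-u') (v-v') := by
  ext i j; fin_cases i <;> fin_cases j <;> simp [mkCA] <;> ring

lemma lam_mkCA (x y u v : ℝ) :
    lam1 (mkCA x y u v) = |Real.sqrt (x^2+y^2) - Real.sqrt (u^2+v^2)| ∧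
    lam2 (mkCA x y u v) = Real.sqrt (x^2+y^2) + Real.sqrt (u^2+v^2) := by
  set c := Real.sqrt (x^2+y^2) with hc
  set a := Real.sqrt (u^2+v^2) with ha
  have hc0 : 0 ≤ c := Real.sqrt_nonneg _
  have ha0 : 0 ≤ a := Real.sqrt_nonneg _
  have hc2 : c^2 = x^2+y^2 := Real.sq_sqrt (by positivity)
  have ha2 : a^2 = u^2+v^2 := Real.sq_sqrt (by positivity)
  have hF : frobSq (mkCA x y u v) = 2*c^2 + 2*a^2 := by rw [frobSq_mkCA, hc2, ha2]
  have hd : (mkCA x y u v).det = c^2 - a^2 := by rw [det_mkCA, hc2, ha2]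
  rcases le_total a c with h | h
  · have habs : |(mkCA x y u v).det| = c^2 - a^2 := by
      rw [hd, abs_of_nonneg (by nlinarith)]
    have h1 : frobSq (mkCA x y u v) + 2 * |(mkCA x y u v).det| = (2*c)^2 := by
      rw [hF, habs]; ring
    have h2 : frobSq (mkCA x y u v) - 2 * |(mkCA x y u v).det| = (2*a)^2 := by
      rw [hF, habs]; ring
    constructor
    · unfold lam1
      rw [h1, h2, Real.sqrt_sq (by linarith), Real.sqrt_sq (by linarith),
        abs_of_nonneg (by linarith : (0:ℝ) ≤ c - a)]
      ring
    · unfold lam2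
      rw [h1, h2, Real.sqrt_sq (by linarith), Real.sqrt_sq (by linarith)]
      ring
  · have habs : |(mkCA x y u v).det| = a^2 - c^2 := by
      rw [hd, abs_of_nonpos (by nlinarith)]; ring
    have h1 : frobSq (mkCA x y u v) + 2 * |(mkCA x y u v).det| = (2*a)^2 := by
      rw [hF, habs]; ring
    have h2 : frobSq (mkCA x y u v) - 2 * |(mkCA x y u v).det| = (2*c)^2 := by
      rw [hF, habs]; ring
    constructor
    · unfold lam1
      rw [h1, h2, Real.sqrt_sq (by linarith), Real.sqrt_sq (by linarith),
        abs_of_nonpos (by linarith : c - a ≤ 0)]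
      ring
    · unfold lam2
      rw [h1, h2, Real.sqrt_sq (by linarith), Real.sqrt_sq (by linarith)]
      ring

lemma aux_scale (x y t : ℝ) (ht : 0 ≤ t) :
    ∃ x' y', x'^2 + y'^2 = t^2 ∧
      (x-x')^2 + (y-y')^2 = (Real.sqrt (x^2+y^2) - t)^2 := by
  by_cases h : x^2 + y^2 = 0
  · have hx : x = 0 := by nlinarith [sq_nonneg x, sq_nonneg y]
    have hy : y = 0 := by nlinarith [sq_nonneg x, sq_nonneg y]
    refine ⟨t, 0, by ring, ?_⟩
    rw [hx, hy]
    simp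
  · set c := Real.sqrt (x^2+y^2) with hcdef
    have hc2 : c^2 = x^2+y^2 := Real.sq_sqrt (by positivity)
    have hc0 : c ≠ 0 := by
      intro h0
      rw [h0] at hc2
      exact h (by linarith [hc2])
    refine ⟨(t/c)*x, (t/c)*y, ?_, ?_⟩
    · have : ((t/c)*x)^2 + ((t/c)*y)^2 = t^2/c^2*(x^2+y^2) := by ring
      rw [this, ← hc2]
      field_simp
    · have : (x - (t/c)*x)^2 + (y - (t/c)*y)^2 = (1 - t/c)^2*(x^2+y^2) := by ring
      rw [this, ← hc2]
      field_simp
      try ring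

lemma core_approx (x y u v a₀ b₀ ε : ℝ) (ha₀ : 0 ≤ a₀) (hab : a₀ ≤ b₀)
    (h1 : a₀ - 2*ε < Real.sqrt (x^2+y^2) - Real.sqrt (u^2+v^2))
    (h2 : Real.sqrt (x^2+y^2) - Real.sqrt (u^2+v^2) < a₀ - ε)
    (h3 : b₀ - ε < Real.sqrt (x^2+y^2) + Real.sqrt (u^2+v^2))
    (h4 : Real.sqrt (x^2+y^2) + Real.sqrt (u^2+v^2) < b₀ - ε/2) :
    ∃ x' y' u' v', Real.sqrt (x'^2+y'^2) = (a₀+b₀)/2 ∧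
      Real.sqrt (u'^2+v'^2) = (b₀-a₀)/2 ∧
      (x-x')^2 + (y-y')^2 + (u-u')^2 + (v-v')^2 ≤ (9/2)*ε^2 := by
  obtain ⟨x', y', e1, e2⟩ := aux_scale x y ((a₀+b₀)/2) (by linarith)
  obtain ⟨u', v', e3, e4⟩ := aux_scale u v ((b₀-a₀)/2) (by linarith)
  refine ⟨x', y', u', v', ?_, ?_, ?_⟩
  · rw [e1, Real.sqrt_sq (by linarith)]
  · rw [e3, Real.sqrt_sq (by linarith)]
  · set c := Real.sqrt (x^2+y^2)
    set a := Real.sqrt (u^2+v^2)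
    nlinarith [e2, e4, mul_pos (by linarith : (0:ℝ) < c - a - (a₀ - 2*ε))
        (by linarith : (0:ℝ) < (a₀ - ε) - (c - a)),
      mul_pos (by linarith : (0:ℝ) < c + a - (b₀ - ε))
        (by linarith : (0:ℝ) < (b₀ - ε/2) - (c + a))]

lemma one_le_sqrt_two : (1:ℝ) ≤ Real.sqrt 2 := by
  nlinarith [Real.sq_sqrt (show (0:ℝ) ≤ 2 by norm_num), Real.sqrt_nonneg 2]

/-- for every `ξ ∈ U_n` one has `dist(ξ, E) ≤ 3√2·ε_n`. -/
theorem dist_to_E_estimate (K : Set (ℝ × ℝ)) (hKc : IsCompact K) (hKne : K.Nonempty)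
    (hKsub : K ⊆ {p : ℝ × ℝ | 0 < p.1 ∧ p.1 ≤ p.2})
    (E : Set (Matrix (Fin 2) (Fin 2) ℝ)) (hE : E = {ξ | (lam1 ξ, lam2 ξ) ∈ K})
    (ε : ℝ) (hεpos : 0 < ε) (hεlt : ε < sInf (Prod.fst '' K) / 2)
    (U : Set (Matrix (Fin 2) (Fin 2) ℝ))
    (hU : U = {ξ | ∃ p ∈ K, p.1 - 2 * ε < lam1 ξ ∧ lam1 ξ < p.1 - ε ∧
      p.2 - ε < lam2 ξ ∧ lam2 ξ < p.2 - ε / 2}) :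
    ∀ ξ ∈ U, distE ξ E ≤ 3 * Real.sqrt 2 * ε := by
  intro ξ hξ
  rw [hU] at hξ
  obtain ⟨p, hpK, h1, h2, h3, h4⟩ := hξ
  obtain ⟨hp1, hp12⟩ := hKsub hpK
  obtain ⟨x, y, u, v, rfl⟩ := exists_mkCA ξ
  obtain ⟨hl1, hl2⟩ := lam_mkCA x y u v
  rw [hl1] at h1 h2
  rw [hl2] at h3 h4
  set c := Real.sqrt (x^2+y^2) with hcdef
  set a := Real.sqrt (u^2+v^2) with hadef
  -- In either case we get a matrix η = mkCA X Y U' V' with singular values (p.1, p.2)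
  -- at squared Frobenius distance at most 9 ε².
  have key : ∃ η ∈ E, frobSq (mkCA x y u v - η) ≤ 9 * ε^2 := by
    rcases le_total a c with hca | hca
    · rw [abs_of_nonneg (by linarith : (0:ℝ) ≤ c - a)] at h1 h2
      obtain ⟨x', y', u', v', e1, e2, e3⟩ :=
        core_approx x y u v p.1 p.2 ε (le_of_lt hp1) hp12 h1 h2 h3 h4
      refine ⟨mkCA x' y' u' v', ?_, ?_⟩
      · rw [hE]
        have g := lam_mkCA x' y' u' v'
        have hA : lam1 (mkCA x' y' u' v') = p.1 := by
          rw [g.1, e1, e2, show (p.1+p.2)/2 - (p.2-p.1)/2 = p.1 by ring,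
            abs_of_nonneg hp1.le]
        have hB : lam2 (mkCA x' y' u' v') = p.2 := by
          rw [g.2, e1, e2]; ring
        simp only [Set.mem_setOf_eq, hA, hB]
        exact hpK
      · rw [sub_mkCA, frobSq_mkCA]; nlinarith [e3]
    · rw [abs_of_nonpos (by linarith : c - a ≤ 0)] at h1 h2
      obtain ⟨u', v', x', y', e1, e2, e3⟩ :=
        core_approx u v x y p.1 p.2 ε (le_of_lt hp1) hp12
          (by rw [← hcdef, ← hadef]; linarith) (by rw [← hcdef, ← hadef]; linarith)
          (by rw [← hcdef, ← hadef]; linarith) (by rw [← hcdef, ← hadef]; linarith)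
      refine ⟨mkCA x' y' u' v', ?_, ?_⟩
      · rw [hE]
        have g := lam_mkCA x' y' u' v'
        have hA : lam1 (mkCA x' y' u' v') = p.1 := by
          rw [g.1, e1, e2, show (p.2-p.1)/2 - (p.1+p.2)/2 = -p.1 by ring,
            abs_neg, abs_of_nonneg hp1.le]
        have hB : lam2 (mkCA x' y' u' v') = p.2 := by
          rw [g.2, e1, e2]; ring
        simp only [Set.mem_setOf_eq, hA, hB]
        exact hpK
      · rw [sub_mkCA, frobSq_mkCA]; nlinarith [e3]
  obtain ⟨η, hηE, hηd⟩ := key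
  have hnorm : frobNorm (mkCA x y u v - η) ≤ 3 * ε := by
    have h9 : (9:ℝ) * ε^2 = (3*ε)^2 := by ring
    rw [frobNorm]
    calc Real.sqrt (frobSq (mkCA x y u v - η)) ≤ Real.sqrt ((3*ε)^2) :=
          Real.sqrt_le_sqrt (by linarith)
      _ = 3*ε := Real.sqrt_sq (by linarith)
  have hbdd : BddBelow ((fun η => frobNorm (mkCA x y u v - η)) '' E) := by
    refine ⟨0, ?_⟩
    rintro r ⟨η', _, rfl⟩
    exact Real.sqrt_nonneg _
  have hmem : frobNorm (mkCA x y u v - η) ∈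
      (fun η => frobNorm (mkCA x y u v - η)) '' E := ⟨η, hηE, rfl⟩
  calc distE (mkCA x y u v) E ≤ frobNorm (mkCA x y u v - η) := csInf_le hbdd hmem
    _ ≤ 3 * ε := hnorm
    _ ≤ 3 * Real.sqrt 2 * ε := by nlinarith [one_le_sqrt_two]
end

section
/- Let K ⊂ {(x,y) ∈ ℝ² : 0 < x ≤ y} be compact, let ε_n be a decreasing sequence with 0 < ε_n < a₀/2 (a₀ = min_{(a,b)∈K} a) and ε_n → 0, let 0 < δ_n < ε_n/4, and set K_n := ⋃_{(a,b)∈K} [a − 2ε_n + δ_n, a − ε_n − δ_n] × [b − ε_n + δ_n, b − ε_n/2 − δ_n]. Then max_{(a,b) ∈ K_n} f_θ(a,b) → max_{(a,b) ∈ K} f_θ(a,b) as n → ∞, uniformly with respect to θ ∈ [0, max_{(a,b)∈K} b]. -/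
open scoped BigOperators

private lemma ftheta_est (th a b x y en dn C M : ℝ) (ha : 0 < a) (hab : a ≤ b)
    (haC : a ≤ C) (hbC : b ≤ C) (hth0 : 0 ≤ th) (hthM : th ≤ M)
    (he : 0 < en) (hd0 : 0 < dn) (hd : dn < en / 4)
    (hx1 : a - 2*en + dn ≤ x) (hx2 : x ≤ a - en - dn)
    (hy1 : b - en + dn ≤ y) (hy2 : y ≤ b - en/2 - dn) :
    |ftheta th (x, y) - ftheta th (a, b)| ≤ en * (3*C + 2*M + 2*en) := by
  have hM0 : 0 ≤ M := le_trans hth0 hthM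
  have hC0 : 0 < C := lt_of_lt_of_le ha haC
  have h1 : 0 ≤ th * ((a - x) - (b - y)) :=
    mul_nonneg hth0 (by linarith)
  have h2 : 0 ≤ (a - x) * (b - y) :=
    mul_nonneg (by linarith) (by linarith)
  have h3 : th * (a - x) ≤ M * (2 * en) :=
    mul_le_mul hthM (by linarith) (by linarith) hM0
  have h4 : (a - x) * (b - y) ≤ (2 * en) * en :=
    mul_le_mul (by linarith) (by linarith) (by linarith) (by linarith)
  have h5 : (a - x) * b ≤ (2 * en) * C :=
    mul_le_mul (by linarith) hbC (by linarith) (by linarith)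
  have h6 : (b - y) * a ≤ en * C :=
    mul_le_mul (by linarith) haC (by linarith) (by linarith)
  have h7 : 0 ≤ (a - x) * b := mul_nonneg (by linarith) (by linarith)
  have h8 : 0 ≤ (b - y) * a := mul_nonneg (by linarith) (by linarith)
  rw [abs_le]
  simp only [ftheta]
  constructor <;> nlinarith [h1, h2, h3, h4, h5, h6, h7, h8]

/-- uniform convergence of `max_{K_n} f_θ` to `max_K f_θ` for
`θ ∈ [0, max_{(a,b)∈K} b]`. -/
theorem ftheta_max_uniform_convergence (K : Set (ℝ × ℝ)) (hKc : IsCompact K) (hKne : K.Nonempty)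
    (hKsub : K ⊆ {p : ℝ × ℝ | 0 < p.1 ∧ p.1 ≤ p.2})
    (ε δ : ℕ → ℝ) (hεanti : Antitone ε)
    (hεpos : ∀ n, 0 < ε n) (hεlt : ∀ n, ε n < sInf (Prod.fst '' K) / 2)
    (hε0 : Filter.Tendsto ε Filter.atTop (nhds 0))
    (hδ : ∀ n, 0 < δ n ∧ δ n < ε n / 4)
    (Kn : ℕ → Set (ℝ × ℝ))
    (hKn : ∀ n, Kn n = ⋃ p ∈ K,
      Set.Icc (p.1 - 2 * ε n + δ n) (p.1 - ε n - δ n) ×ˢ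
        Set.Icc (p.2 - ε n + δ n) (p.2 - ε n / 2 - δ n)) :
    TendstoUniformlyOn (fun n θ => sSup (ftheta θ '' Kn n))
      (fun θ => sSup (ftheta θ '' K)) Filter.atTop
      (Set.Icc 0 (sSup (Prod.snd '' K))) := by
  obtain ⟨r, hr⟩ := hKc.isBounded.subset_closedBall 0
  set C : ℝ := max r 0 with hCdef
  have hC : ∀ p ∈ K, p.1 ≤ C ∧ p.2 ≤ C := by
    intro p hp
    have h := hr hp
    rw [Metric.mem_closedBall, dist_zero_right] at h
    have h1 : ‖p.1‖ ≤ ‖p‖ := norm_fst_le p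
    have h2 : ‖p.2‖ ≤ ‖p‖ := norm_snd_le p
    rw [Real.norm_eq_abs] at h1 h2
    constructor
    · calc p.1 ≤ |p.1| := le_abs_self _
        _ ≤ ‖p‖ := h1
        _ ≤ r := h
        _ ≤ C := le_max_left _ _
    · calc p.2 ≤ |p.2| := le_abs_self _
        _ ≤ ‖p‖ := h2
        _ ≤ r := h
        _ ≤ C := le_max_left _ _
  set M : ℝ := sSup (Prod.snd '' K) with hMdef
  rw [Metric.tendstoUniformlyOn_iff]
  intro e he
  have hB : Filter.Tendsto (fun n => ε n * (3*C + 2*M + 2*ε n)) Filter.atTop (nhds 0) := by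
    have h := hε0.mul (((tendsto_const_nhds (x := 3*C + 2*M)
      (f := Filter.atTop (α := ℕ)))).add (hε0.const_mul 2))
    simpa using h
  filter_upwards [hB.eventually (gt_mem_nhds he)] with n hn θ hθ
  set B : ℝ := ε n * (3*C + 2*M + 2*ε n) with hBdef
  obtain ⟨hδ0, hδε⟩ := hδ n
  have hεn := hεpos n
  have hKimne : (ftheta θ '' K).Nonempty := hKne.image _
  have hfc : Continuous (ftheta θ) := by
    have hfeq : ftheta θ = fun p : ℝ × ℝ => p.1 * p.2 + θ * (p.2 - p.1) := rfl
    rw [hfeq]; fun_prop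
  have hKimbdd : BddAbove (ftheta θ '' K) := (hKc.image hfc).bddAbove
  have hcorner : ∀ p ∈ K, (p.1 - ε n - δ n, p.2 - ε n / 2 - δ n) ∈ Kn n := by
    intro p hp
    rw [hKn n]
    refine Set.mem_iUnion₂.2 ⟨p, hp, ?_⟩
    exact ⟨⟨by linarith, by linarith⟩, ⟨by linarith, by linarith⟩⟩
  have hub : ∀ q ∈ Kn n, ftheta θ q ≤ sSup (ftheta θ '' K) + B := by
    intro q hq
    rw [hKn n] at hq
    obtain ⟨p, hp, hq⟩ := Set.mem_iUnion₂.1 hq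
    obtain ⟨⟨hx1, hx2⟩, hy1, hy2⟩ := hq
    have hpK := hKsub hp
    have hCp := hC p hp
    have hest := ftheta_est θ p.1 p.2 q.1 q.2 (ε n) (δ n) C M hpK.1 hpK.2
      hCp.1 hCp.2 hθ.1 hθ.2 hεn hδ0 hδε hx1 hx2 hy1 hy2
    rw [Prod.mk.eta, Prod.mk.eta] at hest
    have hle : ftheta θ p ≤ sSup (ftheta θ '' K) := le_csSup hKimbdd ⟨p, hp, rfl⟩
    have habs := (abs_le.1 hest).2
    linarith
  have hKnne : (Kn n).Nonempty := by
    obtain ⟨p, hp⟩ := hKne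
    exact ⟨_, hcorner p hp⟩
  have hKnimne : (ftheta θ '' Kn n).Nonempty := hKnne.image _
  have hKnimbdd : BddAbove (ftheta θ '' Kn n) := by
    refine ⟨sSup (ftheta θ '' K) + B, ?_⟩
    rintro _ ⟨q, hq, rfl⟩
    exact hub q hq
  have hsup1 : sSup (ftheta θ '' Kn n) ≤ sSup (ftheta θ '' K) + B := by
    refine csSup_le hKnimne ?_
    rintro _ ⟨q, hq, rfl⟩
    exact hub q hq
  have hsup2 : sSup (ftheta θ '' K) ≤ sSup (ftheta θ '' Kn n) + B := by
    refine csSup_le hKimne ?_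
    rintro _ ⟨p, hp, rfl⟩
    have hpK := hKsub hp
    have hCp := hC p hp
    have hest := ftheta_est θ p.1 p.2 (p.1 - ε n - δ n) (p.2 - ε n / 2 - δ n)
      (ε n) (δ n) C M hpK.1 hpK.2 hCp.1 hCp.2 hθ.1 hθ.2 hεn hδ0 hδε
      (by linarith) (by linarith) (by linarith) (by linarith)
    rw [Prod.mk.eta] at hest
    have habs := (abs_le.1 hest).1
    have hle : ftheta θ (p.1 - ε n - δ n, p.2 - ε n / 2 - δ n) ≤
        sSup (ftheta θ '' Kn n) := le_csSup hKnimbdd ⟨_, hcorner p hp, rfl⟩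
    linarith
  rw [Real.dist_eq, abs_sub_lt_iff]
  constructor <;> linarith
end
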